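/- arXiv:2205.06571 — 3 statements merged into one kernel-verified Lean document; each statement's English description precedes it below -/
import Mathlib

section
/- Let q = (q_n)_{n=0}^∞ be a bounded sequence of positive integers with q₀ = 1, let c^{(n)} = (c^{(n)}_0,…,c^{(n)}_{q_n}) be positive integers with c^{(n)}_0 = c^{(n)}_{q_n} = d_res for n ≥ 1, let W^{(n)}_m ∈ ℝ^{c^{(n)}_m × c^{(n)}_{m−1}} and b^{(n)}_m ∈ ℝ^{c^{(n)}_m} for n ≥ 1, and let the initial block be given by W^{(0)}_1 = [W_s 0] − I_{d_res} with W_s ∈ ℝ^{d_res × d_in}, d_in ≤ d_res, and b^{(0)}_1 = b_s ∈ ℝ^{d_res}. If ∑_{k=0}^∞ ∏_{m=1}^{q_k} ‖W^{(k)}_m‖ < +∞ and ∑_{k=0}^∞ ∑_{m=1}^{q_k} (∏_{m'=m+1}^{q_k} ‖W^{(k)}_{m'}‖) ‖b^{(k)}_m‖ < +∞, then the deep neural network with shortcut connections, i.e. the sequence of maps x ↦ 𝒩_{c,q,n}((x,0)) with (x,0) ∈ ℝ^{d_res} the zero-padded input, converges pointwise on [0,1]^{d_in} as n → ∞. -/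
open Filter Matrix Topology
open scoped ENNReal

noncomputable section

/-- The ReLU activation applied componentwise. -/
def relu {d : ℕ} (x : Fin d → ℝ) : Fin d → ℝ := fun i => max (x i) 0

/-- Cast a vector along an equality of dimensions. -/
def castVec {a b : ℕ} (h : a = b) (v : Fin a → ℝ) : Fin b → ℝ := fun i => v (Fin.cast h.symm i)

/-- Cast a matrix along equalities of its dimensions. -/
def mcast {a a' b b' : ℕ} (ha : a = a') (hb : b = b') (M : Matrix (Fin a) (Fin b) ℝ) :
    Matrix (Fin a') (Fin b') ℝ :=
  M.submatrix (Fin.cast ha.symm) (Fin.cast hb.symm)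

/-- Outputs of consecutive fully connected ReLU layers:
`hiddenSeq c W b m x = (σ(W m ⬝ · + b m) ∘ ⋯ ∘ σ(W 1 ⬝ · + b 1)) x` (0-based weight indices). -/
def hiddenSeq (c : ℕ → ℕ) (W : ∀ m, Matrix (Fin (c (m+1))) (Fin (c m)) ℝ)
    (b : ∀ m, Fin (c (m+1)) → ℝ) : (m : ℕ) → (Fin (c 0) → ℝ) → Fin (c m) → ℝ
  | 0 => fun x => x
  | m+1 => fun x => relu ((W m).mulVec (hiddenSeq c W b m x) + b m)

/-- A residual block with `q` layers (`q ≥ 1`), shortcut connection added before the last ReLU. -/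
def resBlock (d q : ℕ) (hq : 0 < q) (c : ℕ → ℕ) (hc0 : c 0 = d) (hcq : c q = d)
    (W : ∀ m, Matrix (Fin (c (m+1))) (Fin (c m)) ℝ)
    (b : ∀ m, Fin (c (m+1)) → ℝ) (x : Fin d → ℝ) : Fin d → ℝ :=
  castVec (show c (q-1+1) = d from (congrArg c (Nat.succ_pred_eq_of_pos hq)).trans hcq)
    (relu ((W (q-1)).mulVec (hiddenSeq c W b (q-1) (castVec hc0.symm x))
      + castVec (show c (q-1+1) = d from
          (congrArg c (Nat.succ_pred_eq_of_pos hq)).trans hcq).symm x + b (q-1)))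

/-- The deep network with shortcut connections: composition of residual blocks `0,…,n`. -/
def resNet (d : ℕ) (q : ℕ → ℕ) (hq : ∀ n, 0 < q n) (c : ℕ → ℕ → ℕ)
    (hc0 : ∀ n, c n 0 = d) (hcq : ∀ n, c n (q n) = d)
    (W : ∀ n m, Matrix (Fin (c n (m+1))) (Fin (c n m)) ℝ)
    (b : ∀ n m, Fin (c n (m+1)) → ℝ) :
    ℕ → (Fin d → ℝ) → Fin d → ℝ
  | 0 => resBlock d (q 0) (hq 0) (c 0) (hc0 0) (hcq 0) (W 0) (b 0)
  | n+1 => fun x => resBlock d (q (n+1)) (hq (n+1)) (c (n+1)) (hc0 (n+1)) (hcq (n+1))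
      (W (n+1)) (b (n+1)) (resNet d q hq c hc0 hcq W b n x)

/-- `J` is a 0/1 diagonal (activation) matrix. -/
def IsActivation {a : ℕ} (J : Matrix (Fin a) (Fin a) ℝ) : Prop :=
  (∀ i, J i i = 0 ∨ J i i = 1) ∧ ∀ i j, i ≠ j → J i j = 0

/-- The pre-activation vector `z` has exactly the sign pattern prescribed by the
activation matrix `J`: positive on the support of `J` and `≤ 0` off it. -/
def inPattern {a : ℕ} (J : Matrix (Fin a) (Fin a) ℝ) (z : Fin a → ℝ) : Prop :=
  ∀ i, J i i = 1 ↔ 0 < z i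

/-- `x` lies in the activation domain of a single residual block w.r.t. `J`. -/
def blockDomain (d q : ℕ) (hq : 0 < q) (c : ℕ → ℕ) (hc0 : c 0 = d) (hcq : c q = d)
    (W : ∀ m, Matrix (Fin (c (m+1))) (Fin (c m)) ℝ)
    (b : ∀ m, Fin (c (m+1)) → ℝ)
    (J : ∀ m, Matrix (Fin (c (m+1))) (Fin (c (m+1))) ℝ) (x : Fin d → ℝ) : Prop :=
  (∀ m, m + 1 < q →
    inPattern (J m) ((W m).mulVec (hiddenSeq c W b m (castVec hc0.symm x)) + b m)) ∧
  inPattern (J (q-1)) ((W (q-1)).mulVec (hiddenSeq c W b (q-1) (castVec hc0.symm x))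
    + castVec (show c (q-1+1) = d from
        (congrArg c (Nat.succ_pred_eq_of_pos hq)).trans hcq).symm x + b (q-1))

/-- The input fed to block `k` (output of the previous blocks; the input itself when `k = 0`). -/
def netInput (d : ℕ) (q : ℕ → ℕ) (hq : ∀ n, 0 < q n) (c : ℕ → ℕ → ℕ)
    (hc0 : ∀ n, c n 0 = d) (hcq : ∀ n, c n (q n) = d)
    (W : ∀ n m, Matrix (Fin (c n (m+1))) (Fin (c n m)) ℝ)
    (b : ∀ n m, Fin (c n (m+1)) → ℝ) :
    ℕ → (Fin d → ℝ) → Fin d → ℝ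
  | 0 => fun x => x
  | k+1 => resNet d q hq c hc0 hcq W b k

/-- Activation domain of the multi-residual-block network `𝒩_{c,q,n}` w.r.t. `J`:
`x ∈ [0,1]^d` and at each layer of each block the pre-activation has the pattern of `J`. -/
def InActDomain (d : ℕ) (q : ℕ → ℕ) (hq : ∀ n, 0 < q n) (c : ℕ → ℕ → ℕ)
    (hc0 : ∀ n, c n 0 = d) (hcq : ∀ n, c n (q n) = d)
    (W : ∀ n m, Matrix (Fin (c n (m+1))) (Fin (c n m)) ℝ)
    (b : ∀ n m, Fin (c n (m+1)) → ℝ)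
    (J : ∀ n m, Matrix (Fin (c n (m+1))) (Fin (c n (m+1))) ℝ)
    (n : ℕ) (x : Fin d → ℝ) : Prop :=
  (∀ i, x i ∈ Set.Icc (0:ℝ) 1) ∧
  ∀ k ≤ n, blockDomain d (q k) (hq k) (c k) (hc0 k) (hcq k) (W k) (b k) (J k)
    (netInput d q hq c hc0 hcq W b k x)

/-- `prodSeg f a n = f n * f (n-1) * ⋯ * f a` (the identity when `n < a`). -/
def prodSeg {α : Type*} [Monoid α] (f : ℕ → α) (a n : ℕ) : α :=
  ((List.range' a (n + 1 - a)).reverse.map f).prod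

/-- `innerProdFrom c W J a m = (J (a+m) W (a+m)) ⋯ (J (a+1) W (a+1)) (J a W a)`,
i.e. the product `∏_{m'=a+1}^{a+m} J_{m'} W_{m'}` in the 1-based indexing of the paper. -/
def innerProdFrom (c : ℕ → ℕ) (W : ∀ m, Matrix (Fin (c (m+1))) (Fin (c m)) ℝ)
    (J : ∀ m, Matrix (Fin (c (m+1))) (Fin (c (m+1))) ℝ) (a : ℕ) :
    (m : ℕ) → Matrix (Fin (c (a + m))) (Fin (c a)) ℝ
  | 0 => (1 : Matrix (Fin (c a)) (Fin (c a)) ℝ)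
  | m+1 => (J (a + m) * W (a + m)) * innerProdFrom c W J a m

/-- The matrix `∏_{m=1}^{q} J_m W_m + J_q` of a residual block. -/
def blockMat (d q : ℕ) (hq : 0 < q) (c : ℕ → ℕ) (hc0 : c 0 = d) (hcq : c q = d)
    (W : ∀ m, Matrix (Fin (c (m+1))) (Fin (c m)) ℝ)
    (J : ∀ m, Matrix (Fin (c (m+1))) (Fin (c (m+1))) ℝ) :
    Matrix (Fin d) (Fin d) ℝ :=
  mcast ((congrArg c (Nat.zero_add q)).trans hcq) hc0 (innerProdFrom c W J 0 q)
    + mcast (show c (q-1+1) = d from (congrArg c (Nat.succ_pred_eq_of_pos hq)).trans hcq)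
        (show c (q-1+1) = d from (congrArg c (Nat.succ_pred_eq_of_pos hq)).trans hcq) (J (q-1))

/-- `Aseq n = ∏_{k=0}^{n} (∏_{m=1}^{q_k} J^{(k)}_m W^{(k)}_m + J^{(k)}_{q_k})`. -/
def Aseq (d : ℕ) (q : ℕ → ℕ) (hq : ∀ n, 0 < q n) (c : ℕ → ℕ → ℕ)
    (hc0 : ∀ n, c n 0 = d) (hcq : ∀ n, c n (q n) = d)
    (W : ∀ n m, Matrix (Fin (c n (m+1))) (Fin (c n m)) ℝ)
    (J : ∀ n m, Matrix (Fin (c n (m+1))) (Fin (c n (m+1))) ℝ) (n : ℕ) :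
    Matrix (Fin d) (Fin d) ℝ :=
  prodSeg (fun k => blockMat d (q k) (hq k) (c k) (hc0 k) (hcq k) (W k) (J k)) 0 n

/-- `∑_{m=1}^{q} (∏_{m'=m+1}^{q} J_{m'} W_{m'}) J_m b_m` for one residual block. -/
def blockBias (d q : ℕ) (c : ℕ → ℕ) (hcq : c q = d)
    (W : ∀ m, Matrix (Fin (c (m+1))) (Fin (c m)) ℝ)
    (b : ∀ m, Fin (c (m+1)) → ℝ)
    (J : ∀ m, Matrix (Fin (c (m+1))) (Fin (c (m+1))) ℝ) : Fin d → ℝ :=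
  ∑ m ∈ (Finset.range q).attach,
    (mcast ((congrArg c (Nat.add_sub_cancel' (Finset.mem_range.mp m.2))).trans hcq) rfl
        (innerProdFrom c W J (m.1+1) (q - (m.1+1)))).mulVec ((J m.1).mulVec (b m.1))

/-- `Bseq n = ∑_{k=0}^{n} ∑_{m=1}^{q_k} [∏_{k'=k+1}^{n} (∏_{m'} J W + J)] (∏_{m'>m} J W) J_m b_m`. -/
def Bseq (d : ℕ) (q : ℕ → ℕ) (hq : ∀ n, 0 < q n) (c : ℕ → ℕ → ℕ)
    (hc0 : ∀ n, c n 0 = d) (hcq : ∀ n, c n (q n) = d)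
    (W : ∀ n m, Matrix (Fin (c n (m+1))) (Fin (c n m)) ℝ)
    (b : ∀ n m, Fin (c n (m+1)) → ℝ)
    (J : ∀ n m, Matrix (Fin (c n (m+1))) (Fin (c n (m+1))) ℝ) (n : ℕ) : Fin d → ℝ :=
  ∑ k ∈ Finset.range (n+1),
    (prodSeg (fun k' => blockMat d (q k') (hq k') (c k') (hc0 k') (hcq k') (W k') (J k'))
        (k+1) n).mulVec
      (blockBias d (q k) (c k) (hcq k) (W k) (b k) (J k))

/-- A family of norms on the spaces `ℝ^m` which is monotone in the sense of the paper. -/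
structure NormFamily where
  N : ∀ m : ℕ, (Fin m → ℝ) → ℝ
  eq_zero_iff : ∀ (m : ℕ) (x : Fin m → ℝ), N m x = 0 ↔ x = 0
  add_le : ∀ (m : ℕ) (x y : Fin m → ℝ), N m (x + y) ≤ N m x + N m y
  smul_eq : ∀ (m : ℕ) (r : ℝ) (x : Fin m → ℝ), N m (r • x) = |r| * N m x
  mono : ∀ (m : ℕ) (x y : Fin m → ℝ), (∀ i, |x i| ≤ |y i|) → N m x ≤ N m y

/-- The operator (matrix) norm induced by a family of vector norms. -/
def NormFamily.op (F : NormFamily) {a b : ℕ} (M : Matrix (Fin a) (Fin b) ℝ) : ℝ :=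
  sSup ((fun x => F.N a (M.mulVec x) / F.N b x) '' {x : Fin b → ℝ | x ≠ 0})

/-- 1-D Toeplitz convolution-with-zero-padding matrix of a filter mask `u ∈ ℝ^{2f+1}`:
`(T1 f d u) a b = u (f - b + a)` when `-f ≤ b - a ≤ f` and `0` otherwise. -/
def T1 (f d : ℕ) (u : Fin (2*f+1) → ℝ) : Matrix (Fin d) (Fin d) ℝ :=
  fun a b =>
    if h : -(f:ℤ) ≤ ((b:ℕ):ℤ) - ((a:ℕ):ℤ) ∧ ((b:ℕ):ℤ) - ((a:ℕ):ℤ) ≤ (f:ℤ) then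
      u ⟨((f:ℤ) - ((b:ℕ):ℤ) + ((a:ℕ):ℤ)).toNat, by omega⟩
    else 0

/-- 2-D block Toeplitz convolution matrix of a mask `v ∈ ℝ^{(2f+1)×(2f+1)}`:
the `(a,b)` block is `T1 f d (v (f - b + a))` when `-f ≤ b - a ≤ f` and `0` otherwise. -/
def T2 (f d : ℕ) (v : Fin (2*f+1) → Fin (2*f+1) → ℝ) :
    Matrix (Fin d × Fin d) (Fin d × Fin d) ℝ :=
  fun P Q =>
    if h : -(f:ℤ) ≤ ((Q.1:ℕ):ℤ) - ((P.1:ℕ):ℤ) ∧ ((Q.1:ℕ):ℤ) - ((P.1:ℕ):ℤ) ≤ (f:ℤ) then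
      T1 f d (v ⟨((f:ℤ) - ((Q.1:ℕ):ℤ) + ((P.1:ℕ):ℤ)).toNat, by omega⟩) P.2 Q.2
    else 0

/-- The block matrix `T(w)` of a multi-channel convolution
with `cin` input channels and `cout` output channels: the `(i,j)` block is `T2 f d (w i j)`. -/
def Tmulti (f d cin cout : ℕ)
    (w : Fin cout → Fin cin → Fin (2*f+1) → Fin (2*f+1) → ℝ) :
    Matrix (Fin cout × Fin d × Fin d) (Fin cin × Fin d × Fin d) ℝ :=
  fun P Q => T2 f d (w P.1 Q.1) P.2 Q.2

/-- Multi-channel 2-D convolution with zero padding, as matrix-vector multiplication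
by the Toeplitz-type matrices `T2`. -/
def convLayer (f d cin cout : ℕ)
    (w : Fin cout → Fin cin → Fin (2*f+1) → Fin (2*f+1) → ℝ)
    (x : Fin cin → Fin d → Fin d → ℝ) : Fin cout → Fin d → Fin d → ℝ :=
  fun i a b => ∑ j, ∑ s, ∑ t, T2 f d (w i j) (a, b) (s, t) * x j s t

/-- Cast the channel index of a tensor along an equality of channel numbers. -/
def castChan {d a b : ℕ} (h : a = b) (x : Fin a → Fin d → Fin d → ℝ) :
    Fin b → Fin d → Fin d → ℝ :=
  fun i => x (Fin.cast h.symm i)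

/-- Hidden layers of a convolutional residual block (with constant-per-channel biases `β`). -/
def convHidden (d : ℕ) (c : ℕ → ℕ) (f : ℕ → ℕ)
    (w : ∀ m, Fin (c (m+1)) → Fin (c m) → Fin (2 * f m + 1) → Fin (2 * f m + 1) → ℝ)
    (β : ∀ m, Fin (c (m+1)) → ℝ) :
    (m : ℕ) → (Fin (c 0) → Fin d → Fin d → ℝ) → Fin (c m) → Fin d → Fin d → ℝ
  | 0 => fun x => x
  | m+1 => fun x i a b =>
      max (convLayer (f m) d (c m) (c (m+1)) (w m) (convHidden d c f w β m x) i a b + β m i) 0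

/-- A convolutional residual block with `Q ≥ 1` convolutional layers and a shortcut connection. -/
def convBlock (d Q : ℕ) (hQ : 0 < Q) (cres : ℕ) (c : ℕ → ℕ)
    (hc0 : c 0 = cres) (hcq : c Q = cres) (f : ℕ → ℕ)
    (w : ∀ m, Fin (c (m+1)) → Fin (c m) → Fin (2 * f m + 1) → Fin (2 * f m + 1) → ℝ)
    (β : ∀ m, Fin (c (m+1)) → ℝ)
    (x : Fin cres → Fin d → Fin d → ℝ) : Fin cres → Fin d → Fin d → ℝ :=
  castChan (show c (Q-1+1) = cres from (congrArg c (Nat.succ_pred_eq_of_pos hQ)).trans hcq)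
    (fun i a b =>
      max (convLayer (f (Q-1)) d (c (Q-1)) (c (Q-1+1)) (w (Q-1))
            (convHidden d c f w β (Q-1) (castChan hc0.symm x)) i a b
          + x (Fin.cast (show c (Q-1+1) = cres from
              (congrArg c (Nat.succ_pred_eq_of_pos hQ)).trans hcq) i) a b
          + β (Q-1) i) 0)

/-- The deep convolutional ResNet without the output layer: sampling layer
`σ(x ∗ w_s + b_s)` (block `0`) followed by the convolutional residual blocks `1,…,n`. -/
def convNet (d cin cres : ℕ) (q : ℕ → ℕ) (hq : ∀ n, 0 < q n)
    (c : ℕ → ℕ → ℕ) (hc00 : c 0 0 = cin) (h01 : c 0 1 = cres)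
    (hc0 : ∀ n, 0 < n → c n 0 = cres) (hcq : ∀ n, 0 < n → c n (q n) = cres)
    (f : ℕ → ℕ → ℕ)
    (w : ∀ n m, Fin (c n (m+1)) → Fin (c n m) → Fin (2 * f n m + 1) → Fin (2 * f n m + 1) → ℝ)
    (β : ∀ n m, Fin (c n (m+1)) → ℝ) :
    ℕ → (Fin cin → Fin d → Fin d → ℝ) → Fin cres → Fin d → Fin d → ℝ
  | 0 => fun x => castChan h01 (fun i a b =>
      max (convLayer (f 0 0) d (c 0 0) (c 0 1) (w 0 0) (castChan hc00.symm x) i a b + β 0 0 i) 0)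
  | n+1 => fun x =>
      convBlock d (q (n+1)) (hq (n+1)) cres (c (n+1)) (hc0 (n+1) (Nat.succ_pos n))
        (hcq (n+1) (Nat.succ_pos n)) (f (n+1)) (w (n+1)) (β (n+1))
        (convNet d cin cres q hq c hc00 h01 hc0 hcq f w β n x)

/-- The ℓ_p norm of a vector, `p ∈ [1,∞]`. -/
def lpNorm (p : ℝ≥0∞) {ι : Type*} [Fintype ι] (x : ι → ℝ) : ℝ :=
  if p = ∞ then ⨆ i, |x i| else (∑ i, |x i| ^ p.toReal) ^ (1 / p.toReal)

/-- The matrix (operator) norm induced by the ℓ_p vector norms. -/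
def opNormP (p : ℝ≥0∞) {α β : Type*} [Fintype α] [Fintype β] (M : Matrix α β ℝ) : ℝ :=
  sSup ((fun x => lpNorm p (M.mulVec x) / lpNorm p x) '' {x : β → ℝ | x ≠ 0})

/-- Maximum absolute column sum of a matrix (the operator norm induced by ℓ₁). -/
def maxColSum {α β : Type*} [Fintype α] [Fintype β] (M : Matrix α β ℝ) : ℝ :=
  ⨆ j, ∑ i, |M i j|

/-- Maximum absolute row sum of a matrix (the operator norm induced by ℓ_∞). -/
def maxRowSum {α β : Type*} [Fintype α] [Fintype β] (M : Matrix α β ℝ) : ℝ :=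
  ⨆ i, ∑ j, |M i j|

/-- The block matrix with blocks `A i j ∈ ℝ^{r×c}`, `i < N`, `j < M`. -/
def blockMatrixOf {N M r c : ℕ} (A : Fin N → Fin M → Matrix (Fin r) (Fin c) ℝ) :
    Matrix (Fin N × Fin r) (Fin M × Fin c) ℝ :=
  fun p q => A p.1 q.1 p.2 q.2

/-- The factor `N^{(n)}_m` of Theorem 5.2: the bound of Lemma 5.1 on `‖T(w)‖_p`. -/
def Nfactor (p : ℝ≥0∞) {f cin cout : ℕ}
    (w : Fin cout → Fin cin → Fin (2*f+1) → Fin (2*f+1) → ℝ) : ℝ :=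
  (⨆ j : Fin cin, ∑ i, ∑ i', ∑ j', |w i j i' j'|) ^ ((1/p).toReal)
    * (⨆ i : Fin cout, ∑ j, ∑ i', ∑ j', |w i j i' j'|) ^ (1 - (1/p).toReal)

/-- Zero padding of a vector `x ∈ ℝ^{din}` to a vector `(x, 0) ∈ ℝ^{d}`. -/
def padVec (din d : ℕ) (x : Fin din → ℝ) : Fin d → ℝ :=
  fun i => if h : (i : ℕ) < din then x ⟨i, h⟩ else 0

/-- The matrix `[Ws  0] ∈ ℝ^{d × d}` obtained by padding `Ws ∈ ℝ^{d × din}` with zero columns. -/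
def padMat (din d : ℕ) (Ws : Matrix (Fin d) (Fin din) ℝ) : Matrix (Fin d) (Fin d) ℝ :=
  fun i j => if h : (j : ℕ) < din then Ws i ⟨j, h⟩ else 0

namespace NormFamily

lemma N_zero (F : NormFamily) (m : ℕ) : F.N m 0 = 0 := (F.eq_zero_iff m 0).mpr rfl

lemma N_neg (F : NormFamily) (m : ℕ) (x : Fin m → ℝ) : F.N m (-x) = F.N m x := by
  have h := F.smul_eq m (-1) x
  simpa using h

lemma N_nonneg (F : NormFamily) (m : ℕ) (x : Fin m → ℝ) : 0 ≤ F.N m x := by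
  have h := F.add_le m x (-x)
  rw [add_neg_cancel, F.N_zero, F.N_neg] at h
  linarith

lemma N_castVec (F : NormFamily) {a b : ℕ} (h : a = b) (v : Fin a → ℝ) :
    F.N b (castVec h v) = F.N a v := by subst h; rfl

lemma N_sum_le (F : NormFamily) (m : ℕ) {ι : Type*} (s : Finset ι) (f : ι → Fin m → ℝ) :
    F.N m (∑ j ∈ s, f j) ≤ ∑ j ∈ s, F.N m (f j) := by
  classical
  induction s using Finset.induction_on with
  | empty => simp [F.N_zero]
  | insert _ _ hnot ih =>
    rw [Finset.sum_insert hnot, Finset.sum_insert hnot]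
    exact le_trans (F.add_le _ _ _) (by linarith)

lemma abs_le_N (F : NormFamily) {m : ℕ} (x : Fin m → ℝ) (i : Fin m) :
    |x i| * F.N m (Pi.single i 1) ≤ F.N m x := by
  have h1 : F.N m (x i • (Pi.single i 1 : Fin m → ℝ)) = |x i| * F.N m (Pi.single i 1) :=
    F.smul_eq m (x i) (Pi.single i 1)
  rw [← h1]
  apply F.mono
  intro j
  by_cases hji : j = i
  · subst hji; simp
  · simp [Pi.single_apply, hji]

lemma N_single_pos (F : NormFamily) {m : ℕ} (i : Fin m) :
    0 < F.N m (Pi.single i (1:ℝ)) := by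
  rcases lt_or_eq_of_le (F.N_nonneg m (Pi.single i 1)) with h | h
  · exact h
  · exfalso
    have h0 := (F.eq_zero_iff m (Pi.single i 1)).mp h.symm
    have h2 := congrFun h0 i
    simp at h2

lemma ratio_bound (F : NormFamily) {a b : ℕ} (M : Matrix (Fin a) (Fin b) ℝ) :
    ∀ z : Fin b → ℝ, F.N a (M.mulVec z) ≤
      (∑ j, F.N a (M.mulVec (Pi.single j 1)) * (F.N b (Pi.single j 1))⁻¹) * F.N b z := by
  intro z
  have hdecomp : M.mulVec z = ∑ j, z j • M.mulVec (Pi.single j 1) := by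
    funext i
    simp only [Finset.sum_apply, Pi.smul_apply, smul_eq_mul, Matrix.mulVec, dotProduct,
      Pi.single_apply, mul_ite, mul_one, mul_zero, Finset.mul_sum]
    rw [Finset.sum_comm]
    apply Finset.sum_congr rfl
    intro j _
    simp [mul_comm]
  rw [hdecomp]
  refine le_trans (F.N_sum_le a Finset.univ _) ?_
  rw [Finset.sum_mul]
  apply Finset.sum_le_sum
  intro j _
  rw [F.smul_eq]
  have h1 : |z j| ≤ F.N b z * (F.N b (Pi.single j 1))⁻¹ := by
    rw [le_mul_inv_iff₀ (F.N_single_pos j)]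
    exact F.abs_le_N z j
  calc |z j| * F.N a (M.mulVec (Pi.single j 1))
      ≤ (F.N b z * (F.N b (Pi.single j 1))⁻¹) * F.N a (M.mulVec (Pi.single j 1)) :=
        mul_le_mul_of_nonneg_right h1 (F.N_nonneg _ _)
    _ = F.N a (M.mulVec (Pi.single j 1)) * (F.N b (Pi.single j 1))⁻¹ * F.N b z := by ring

lemma bddAbove_ratio (F : NormFamily) {a b : ℕ} (M : Matrix (Fin a) (Fin b) ℝ) :
    BddAbove ((fun x => F.N a (M.mulVec x) / F.N b x) '' {x : Fin b → ℝ | x ≠ 0}) := by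
  refine ⟨∑ j, F.N a (M.mulVec (Pi.single j 1)) * (F.N b (Pi.single j 1))⁻¹, ?_⟩
  rintro r ⟨z, hz, rfl⟩
  have hNz : 0 < F.N b z := by
    rcases lt_or_eq_of_le (F.N_nonneg b z) with h | h
    · exact h
    · exact absurd ((F.eq_zero_iff b z).mp h.symm) hz
  rw [div_le_iff₀ hNz]
  exact F.ratio_bound M z

lemma N_mulVec_le (F : NormFamily) {a b : ℕ} (M : Matrix (Fin a) (Fin b) ℝ)
    (x : Fin b → ℝ) : F.N a (M.mulVec x) ≤ F.op M * F.N b x := by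
  by_cases hx : x = 0
  · subst hx
    simp [Matrix.mulVec_zero, F.N_zero]
  · have hNx : 0 < F.N b x := by
      rcases lt_or_eq_of_le (F.N_nonneg b x) with h | h
      · exact h
      · exact absurd ((F.eq_zero_iff b x).mp h.symm) hx
    have h := le_csSup (F.bddAbove_ratio M) ⟨x, hx, rfl⟩
    rw [div_le_iff₀ hNx] at h
    exact h

lemma op_nonneg (F : NormFamily) {a b : ℕ} (M : Matrix (Fin a) (Fin b) ℝ) :
    0 ≤ F.op M := by
  by_cases hb : ∃ z : Fin b → ℝ, z ≠ 0
  · obtain ⟨z, hz⟩ := hb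
    refine le_trans ?_ (le_csSup (F.bddAbove_ratio M) ⟨z, hz, rfl⟩)
    exact div_nonneg (F.N_nonneg _ _) (F.N_nonneg _ _)
  · have hempty : {x : Fin b → ℝ | x ≠ 0} = ∅ := by
      ext z
      simp only [Set.mem_setOf_eq, Set.mem_empty_iff_false, iff_false, not_not]
      by_contra hz
      exact hb ⟨z, hz⟩
    unfold NormFamily.op
    rw [hempty, Set.image_empty, Real.sSup_empty]

lemma N_relu_le (F : NormFamily) {m : ℕ} (x : Fin m → ℝ) : F.N m (relu x) ≤ F.N m x := by
  apply F.mono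
  intro i
  simp only [relu]
  rcases le_total (x i) 0 with h | h
  · rw [max_eq_right h]
    simpa using abs_nonneg (x i)
  · rw [max_eq_left h]

end NormFamily

lemma abs_max_sub_le {t s : ℝ} (hs : 0 ≤ s) : |max t 0 - s| ≤ |t - s| := by
  rcases le_total t 0 with h | h
  · rw [max_eq_right h, abs_of_nonpos (by linarith), abs_of_nonpos (by linarith)]
    linarith
  · rw [max_eq_left h]

lemma sum_step (w : ℕ → ℝ) (g : ℕ → ℝ) (m : ℕ) :
    w m * (∑ m' ∈ Finset.range m, (∏ m'' ∈ Finset.Ico (m'+1) m, w m'') * g m') + g m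
      = ∑ m' ∈ Finset.range (m+1), (∏ m'' ∈ Finset.Ico (m'+1) (m+1), w m'') * g m' := by
  rw [Finset.sum_range_succ, Finset.mul_sum]
  congr 1
  · apply Finset.sum_congr rfl
    intro m' hm'
    rw [Finset.prod_Ico_succ_top (Nat.succ_le_of_lt (Finset.mem_range.mp hm'))]
    ring
  · simp

lemma hidden_bound (F : NormFamily) (c : ℕ → ℕ)
    (W : ∀ m, Matrix (Fin (c (m+1))) (Fin (c m)) ℝ)
    (b : ∀ m, Fin (c (m+1)) → ℝ) (y : Fin (c 0) → ℝ) :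
    ∀ m, F.N (c m) (hiddenSeq c W b m y) ≤
      (∏ m' ∈ Finset.range m, F.op (W m')) * F.N (c 0) y
      + ∑ m' ∈ Finset.range m,
          (∏ m'' ∈ Finset.Ico (m'+1) m, F.op (W m'')) * F.N (c (m'+1)) (b m') := by
  intro m
  induction m with
  | zero => simp [hiddenSeq]
  | succ m ih =>
    have h1 : F.N (c (m+1)) (hiddenSeq c W b (m+1) y)
        ≤ F.op (W m) * F.N (c m) (hiddenSeq c W b m y) + F.N (c (m+1)) (b m) := by
      refine le_trans (F.N_relu_le _) ?_
      refine le_trans (F.add_le _ _ _) ?_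
      exact add_le_add (F.N_mulVec_le _ _) le_rfl
    have h2 : F.op (W m) * F.N (c m) (hiddenSeq c W b m y)
        ≤ F.op (W m) * ((∏ m' ∈ Finset.range m, F.op (W m')) * F.N (c 0) y
          + ∑ m' ∈ Finset.range m,
              (∏ m'' ∈ Finset.Ico (m'+1) m, F.op (W m'')) * F.N (c (m'+1)) (b m')) :=
      mul_le_mul_of_nonneg_left ih (F.op_nonneg _)
    rw [← sum_step (fun m' => F.op (W m')) (fun m' => F.N (c (m'+1)) (b m')) m,
      Finset.prod_range_succ]
    calc F.N (c (m+1)) (hiddenSeq c W b (m+1) y)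
        ≤ F.op (W m) * ((∏ m' ∈ Finset.range m, F.op (W m')) * F.N (c 0) y
          + ∑ m' ∈ Finset.range m,
              (∏ m'' ∈ Finset.Ico (m'+1) m, F.op (W m'')) * F.N (c (m'+1)) (b m'))
          + F.N (c (m+1)) (b m) := le_trans h1 (by linarith)
      _ = _ := by ring

lemma resBlock_nonneg (d Q : ℕ) (hQ : 0 < Q) (c : ℕ → ℕ)
    (hc0 : c 0 = d) (hcq : c Q = d)
    (W : ∀ m, Matrix (Fin (c (m+1))) (Fin (c m)) ℝ)
    (b : ∀ m, Fin (c (m+1)) → ℝ) (y : Fin d → ℝ) (i : Fin d) :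
    0 ≤ resBlock d Q hQ c hc0 hcq W b y i := by
  simp only [resBlock, castVec, relu]
  exact le_max_right _ _

lemma resBlock_sub (F : NormFamily) (d Q : ℕ) (hQ : 0 < Q) (c : ℕ → ℕ)
    (hc0 : c 0 = d) (hcq : c Q = d)
    (W : ∀ m, Matrix (Fin (c (m+1))) (Fin (c m)) ℝ)
    (b : ∀ m, Fin (c (m+1)) → ℝ) (y : Fin d → ℝ) (hy : ∀ i, 0 ≤ y i) :
    F.N d (resBlock d Q hQ c hc0 hcq W b y - y) ≤
      (∏ m ∈ Finset.range Q, F.op (W m)) * F.N d y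
      + ∑ m ∈ Finset.range Q,
          (∏ m' ∈ Finset.Ico (m+1) Q, F.op (W m')) * F.N (c (m+1)) (b m) := by
  obtain ⟨m, rfl⟩ := Nat.exists_eq_succ_of_ne_zero hQ.ne'
  have e : c (m+1) = d := hcq
  have hblock : resBlock d (m+1) hQ c hc0 hcq W b y
      = castVec e (relu ((W m).mulVec (hiddenSeq c W b m (castVec hc0.symm y))
          + castVec e.symm y + b m)) := rfl
  set h := hiddenSeq c W b m (castVec hc0.symm y) with hh
  have hpt : ∀ i, |(resBlock d (m+1) hQ c hc0 hcq W b y - y) i|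
      ≤ |(castVec e ((W m).mulVec h + b m)) i| := by
    intro i
    rw [hblock]
    simp only [Pi.sub_apply, castVec, relu, Pi.add_apply]
    have hcc : Fin.cast e.symm.symm (Fin.cast e.symm i) = i := by
      apply Fin.ext
      simp
    rw [hcc]
    have := abs_max_sub_le (t := (W m).mulVec h (Fin.cast e.symm i) + y i
        + b m (Fin.cast e.symm i)) (hy i)
    convert this using 2
    ring
  calc F.N d (resBlock d (m+1) hQ c hc0 hcq W b y - y)
      ≤ F.N d (castVec e ((W m).mulVec h + b m)) := F.mono _ _ _ hpt
    _ = F.N (c (m+1)) ((W m).mulVec h + b m) := F.N_castVec e _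
    _ ≤ F.op (W m) * F.N (c m) h + F.N (c (m+1)) (b m) :=
        le_trans (F.add_le _ _ _) (add_le_add (F.N_mulVec_le _ _) le_rfl)
    _ ≤ F.op (W m) * ((∏ m' ∈ Finset.range m, F.op (W m')) * F.N d y
          + ∑ m' ∈ Finset.range m,
              (∏ m'' ∈ Finset.Ico (m'+1) m, F.op (W m'')) * F.N (c (m'+1)) (b m'))
        + F.N (c (m+1)) (b m) := by
        have hib := hidden_bound F c W b (castVec hc0.symm y) m
        rw [F.N_castVec hc0.symm y] at hib
        have := mul_le_mul_of_nonneg_left hib (F.op_nonneg (W m))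
        linarith
    _ = (∏ m' ∈ Finset.range (m+1), F.op (W m')) * F.N d y
        + ∑ m' ∈ Finset.range (m+1),
            (∏ m'' ∈ Finset.Ico (m'+1) (m+1), F.op (W m'')) * F.N (c (m'+1)) (b m') := by
        rw [← sum_step (fun m' => F.op (W m')) (fun m' => F.N (c (m'+1)) (b m')) m,
          Finset.prod_range_succ]
        ring

theorem stmt5 (F : NormFamily)
    (d din : ℕ) (hd : 0 < d) (hdin : 0 < din) (hdind : din ≤ d)
    (q : ℕ → ℕ) (hq : ∀ k, 0 < q k) (hq0 : q 0 = 1) (hqb : ∃ Q, ∀ k, q k ≤ Q)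
    (c : ℕ → ℕ → ℕ) (hcpos : ∀ k m, m ≤ q k → 0 < c k m)
    (hc0 : ∀ k, c k 0 = d) (hcq : ∀ k, c k (q k) = d) (h01 : c 0 1 = d)
    (W : ∀ k m, Matrix (Fin (c k (m+1))) (Fin (c k m)) ℝ)
    (b : ∀ k m, Fin (c k (m+1)) → ℝ)
    (Ws : Matrix (Fin d) (Fin din) ℝ)
    (hW0 : W 0 0 = mcast h01.symm (hc0 0).symm (padMat din d Ws - 1))
    (hW : Summable fun k => ∏ m ∈ Finset.range (q k), F.op (W k m))
    (hb : Summable fun k => ∑ m ∈ Finset.range (q k),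
      (∏ m' ∈ Finset.Ico (m+1) (q k), F.op (W k m')) * F.N (c k (m+1)) (b k m)) :
    ∀ x : Fin din → ℝ, (∀ i, x i ∈ Set.Icc (0:ℝ) 1) →
      ∃ y, Tendsto (fun n => resNet d q hq c hc0 hcq W b n (padVec din d x))
        atTop (nhds y) := by
  intro x hx
  classical
  set X : Fin d → ℝ := padVec din d x with hX
  set Y : ℕ → Fin d → ℝ := fun n => resNet d q hq c hc0 hcq W b n X with hY
  set a : ℕ → ℝ := fun k => ∏ m ∈ Finset.range (q k), F.op (W k m) with ha
  set β : ℕ → ℝ := fun k => ∑ m ∈ Finset.range (q k),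
    (∏ m' ∈ Finset.Ico (m+1) (q k), F.op (W k m')) * F.N (c k (m+1)) (b k m) with hβ
  have ha0 : ∀ k, 0 ≤ a k := fun k => Finset.prod_nonneg fun m _ => F.op_nonneg _
  have hβ0 : ∀ k, 0 ≤ β k := fun k => Finset.sum_nonneg fun m _ =>
    mul_nonneg (Finset.prod_nonneg fun m' _ => F.op_nonneg _) (F.N_nonneg _ _)
  have hA : Summable a := hW
  have hB : Summable β := hb
  have hXpos : ∀ i, 0 ≤ X i := by
    intro i
    simp only [hX, padVec]
    split
    · exact (hx _).1
    · exact le_refl 0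
  have hYpos : ∀ n i, 0 ≤ Y n i := by
    intro n i
    cases n with
    | zero => exact resBlock_nonneg d (q 0) (hq 0) (c 0) (hc0 0) (hcq 0) (W 0) (b 0) X i
    | succ n =>
      exact resBlock_nonneg d (q (n+1)) (hq (n+1)) (c (n+1)) (hc0 (n+1)) (hcq (n+1))
        (W (n+1)) (b (n+1)) (Y n) i
  have hdiff : ∀ n, F.N d (Y (n+1) - Y n) ≤ a (n+1) * F.N d (Y n) + β (n+1) := fun n =>
    resBlock_sub F d (q (n+1)) (hq (n+1)) (c (n+1)) (hc0 (n+1)) (hcq (n+1)) (W (n+1))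
      (b (n+1)) (Y n) (hYpos n)
  have hdiff0 : F.N d (Y 0 - X) ≤ a 0 * F.N d X + β 0 :=
    resBlock_sub F d (q 0) (hq 0) (c 0) (hc0 0) (hcq 0) (W 0) (b 0) X hXpos
  -- uniform bound on F.N d (Y n)
  have hbd : ∀ n, F.N d (Y n) ≤
      (F.N d X + ∑ k ∈ Finset.range (n+1), β k) * ∏ k ∈ Finset.range (n+1), (1 + a k) := by
    intro n
    induction n with
    | zero =>
      simp only [zero_add, Finset.sum_range_one, Finset.prod_range_one]
      have h1 : F.N d (Y 0) ≤ F.N d (Y 0 - X) + F.N d X := by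
        have h := F.add_le d (Y 0 - X) X
        rwa [sub_add_cancel] at h
      nlinarith [ha0 0, hβ0 0, F.N_nonneg d X, hdiff0]
    | succ n ih =>
      have h1 : F.N d (Y (n+1)) ≤ F.N d (Y (n+1) - Y n) + F.N d (Y n) := by
        have h := F.add_le d (Y (n+1) - Y n) (Y n)
        rwa [sub_add_cancel] at h
      have hP1 : (1:ℝ) ≤ ∏ k ∈ Finset.range (n+1), (1 + a k) := by
        calc (1:ℝ) = ∏ k ∈ Finset.range (n+1), 1 := by simp
          _ ≤ ∏ k ∈ Finset.range (n+1), (1 + a k) :=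
            Finset.prod_le_prod (by intros; norm_num) (fun k _ => by linarith [ha0 k])
      have hS0 : (0:ℝ) ≤ ∑ k ∈ Finset.range (n+1), β k :=
        Finset.sum_nonneg fun k _ => hβ0 k
      rw [Finset.sum_range_succ, Finset.prod_range_succ]
      nlinarith [hdiff n, ha0 (n+1), hβ0 (n+1), F.N_nonneg d (Y n), F.N_nonneg d X,
        mul_le_mul_of_nonneg_left ih (by linarith [ha0 (n+1)] : (0:ℝ) ≤ 1 + a (n+1)),
        mul_le_mul_of_nonneg_left hP1 (hβ0 (n+1))]
  set C : ℝ := (F.N d X + ∑' k, β k) * Real.exp (∑' k, a k) with hC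
  have hYC : ∀ n, F.N d (Y n) ≤ C := by
    intro n
    refine le_trans (hbd n) ?_
    have hS : ∑ k ∈ Finset.range (n+1), β k ≤ ∑' k, β k :=
      Summable.sum_le_tsum _ (fun k _ => hβ0 k) hB
    have hP : ∏ k ∈ Finset.range (n+1), (1 + a k) ≤ Real.exp (∑' k, a k) := by
      calc ∏ k ∈ Finset.range (n+1), (1 + a k)
          ≤ ∏ k ∈ Finset.range (n+1), Real.exp (a k) :=
            Finset.prod_le_prod (fun k _ => by linarith [ha0 k])
              (fun k _ => by linarith [Real.add_one_le_exp (a k)])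
        _ = Real.exp (∑ k ∈ Finset.range (n+1), a k) := (Real.exp_sum _ _).symm
        _ ≤ Real.exp (∑' k, a k) :=
            Real.exp_le_exp.mpr (Summable.sum_le_tsum _ (fun k _ => ha0 k) hA)
    apply mul_le_mul (by linarith) hP
    · exact Finset.prod_nonneg fun k _ => by linarith [ha0 k]
    · have : (0:ℝ) ≤ ∑' k, β k := tsum_nonneg hβ0
      linarith [F.N_nonneg d X]
  set δ : ℕ → ℝ := fun n => a (n+1) * C + β (n+1) with hδdef
  have hδsum : Summable δ := by
    apply Summable.add
    · exact (((summable_nat_add_iff 1).mpr hA).mul_right C)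
    · exact (summable_nat_add_iff 1).mpr hB
  have hδ : ∀ n, F.N d (Y (n+1) - Y n) ≤ δ n := by
    intro n
    refine le_trans (hdiff n) ?_
    have := mul_le_mul_of_nonneg_left (hYC n) (ha0 (n+1))
    simp only [hδdef]
    linarith
  have hcomp : ∀ i : Fin d, ∃ L : ℝ, Tendsto (fun n => Y n i) atTop (nhds L) := by
    intro i
    have hε : 0 < F.N d (Pi.single i 1) := F.N_single_pos i
    have hcau : CauchySeq (fun n => Y n i) := by
      refine cauchySeq_of_dist_le_of_summable (fun n => δ n / F.N d (Pi.single i 1)) ?_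
        (hδsum.div_const _)
      intro n
      rw [Real.dist_eq, le_div_iff₀ hε]
      have h1 := F.abs_le_N (Y (n+1) - Y n) i
      have h2 : |Y n i - Y (n+1) i| = |(Y (n+1) - Y n) i| := by
        rw [Pi.sub_apply, abs_sub_comm]
      rw [h2]
      calc |(Y (n+1) - Y n) i| * F.N d (Pi.single i 1)
          ≤ F.N d (Y (n+1) - Y n) := h1
        _ ≤ δ n := hδ n
    obtain ⟨L, hL⟩ := cauchySeq_tendsto_of_complete hcau
    exact ⟨L, hL⟩
  choose L hL using hcomp
  exact ⟨L, tendsto_pi_nhds.mpr hL⟩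

end
end

section
/- Let f, d, c_in, c_out be positive integers with f + 1 ≤ d, let w = (w_1,…,w_{c_out}) with w_i = (w_{i,1},…,w_{i,c_in}) and w_{i,j} = (w_{i,j,i',j'})_{i',j'=1}^{2f+1} ∈ ℝ^{(2f+1)×(2f+1)} be filter masks for multi-channel two-dimensional convolution with zero padding, and let W = T(w) ∈ ℝ^{d²c_out × d²c_in} be the associated block convolution matrix. Then for every p ∈ [1, +∞], ‖W‖_p ≤ (max_{1≤j≤c_in} ∑_{i=1}^{c_out} ∑_{i'=1}^{2f+1} ∑_{j'=1}^{2f+1} |w_{i,j,i',j'}|)^{1/p} · (max_{1≤i≤c_out} ∑_{j=1}^{c_in} ∑_{i'=1}^{2f+1} ∑_{j'=1}^{2f+1} |w_{i,j,i',j'}|)^{1−1/p}. -/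
open Filter Matrix Topology
open scoped ENNReal

noncomputable section

lemma jensen_sum {ι : Type*} [Fintype ι] (c a : ι → ℝ) (hc : ∀ j, 0 ≤ c j)
    (ha : ∀ j, 0 ≤ a j) (R : ℝ) (hR : ∑ j, c j ≤ R) (t : ℝ) (ht : 1 ≤ t) :
    (∑ j, c j * a j) ^ t ≤ R ^ (t - 1) * ∑ j, c j * a j ^ t := by
  have ht0 : (0:ℝ) < t := lt_of_lt_of_le one_pos ht
  have hS0 : 0 ≤ ∑ j, c j := Finset.sum_nonneg fun j _ => hc j
  have hsum_nonneg : 0 ≤ ∑ j, c j * a j ^ t :=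
    Finset.sum_nonneg fun j _ => mul_nonneg (hc j) (Real.rpow_nonneg (ha j) t)
  by_cases hS : (∑ j, c j) = 0
  · have hc0 : ∀ j ∈ Finset.univ, c j = 0 :=
      (Finset.sum_eq_zero_iff_of_nonneg (fun j _ => hc j)).mp hS
    have : (∑ j, c j * a j) = 0 := Finset.sum_eq_zero fun j hj => by rw [hc0 j hj, zero_mul]
    rw [this, Real.zero_rpow (ne_of_gt ht0)]
    exact mul_nonneg (Real.rpow_nonneg (le_trans hS0 hR) _) hsum_nonneg
  · set S := ∑ j, c j with hSdef
    have hSpos : 0 < S := lt_of_le_of_ne hS0 (Ne.symm hS)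
    have hmean := Real.rpow_arith_mean_le_arith_mean_rpow Finset.univ (fun j => c j / S) a
      (fun j _ => div_nonneg (hc j) hS0) (by rw [← Finset.sum_div]; field_simp; rfl)
      (fun j _ => ha j) ht
    have h1 : (∑ j, c j * a j) = S * ∑ j, (c j / S) * a j := by
      rw [Finset.mul_sum]; congr 1; ext j; field_simp
    have h2 : (∑ j, (c j / S) * a j ^ t) = (∑ j, c j * a j ^ t) / S := by
      rw [Finset.sum_div]; congr 1; ext j; ring
    calc (∑ j, c j * a j) ^ t = S ^ t * (∑ j, (c j / S) * a j) ^ t := by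
          rw [h1, Real.mul_rpow hSpos.le (Finset.sum_nonneg fun j _ =>
            mul_nonneg (div_nonneg (hc j) hS0) (ha j))]
      _ ≤ S ^ t * ∑ j, (c j / S) * a j ^ t :=
          mul_le_mul_of_nonneg_left hmean (Real.rpow_nonneg hSpos.le t)
      _ = S ^ (t-1) * ∑ j, c j * a j ^ t := by
          rw [h2, Real.rpow_sub hSpos, Real.rpow_one]; field_simp
      _ ≤ R ^ (t-1) * ∑ j, c j * a j ^ t :=
          mul_le_mul_of_nonneg_right
            (Real.rpow_le_rpow hSpos.le hR (by linarith)) hsum_nonneg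

lemma lpNorm_pos {p : ℝ≥0∞} (hp : 1 ≤ p) {ι : Type*} [Fintype ι] {x : ι → ℝ}
    (hx : x ≠ 0) : 0 < lpNorm p x := by
  obtain ⟨i, hi⟩ := Function.ne_iff.mp hx
  have hxi : 0 < |x i| := abs_pos.mpr hi
  unfold lpNorm
  split_ifs with h
  · exact lt_of_lt_of_le hxi (le_ciSup (f := fun i => |x i|) (Set.Finite.bddAbove (Set.finite_range _)) i)
  · have hne0 : p ≠ 0 := by intro h0; rw [h0] at hp; simp at hp
    have ht0 : 0 < p.toReal := ENNReal.toReal_pos hne0 h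
    apply Real.rpow_pos_of_pos
    calc (0:ℝ) < |x i| ^ p.toReal := Real.rpow_pos_of_pos hxi _
      _ ≤ ∑ j, |x j| ^ p.toReal :=
        Finset.single_le_sum (fun j _ => Real.rpow_nonneg (abs_nonneg _) _) (Finset.mem_univ i)

lemma lpNorm_mulVec_le {α β : Type*} [Fintype α] [Fintype β] [Nonempty α] [Nonempty β]
    (M : Matrix α β ℝ) {C1 Coo : ℝ} (hC1 : 0 ≤ C1) (hCoo : 0 ≤ Coo)
    (hrow : ∀ i, ∑ j, |M i j| ≤ Coo) (hcol : ∀ j, ∑ i, |M i j| ≤ C1)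
    {p : ℝ≥0∞} (hp : 1 ≤ p) (x : β → ℝ) :
    lpNorm p (M.mulVec x) ≤ C1 ^ (1/p).toReal * Coo ^ (1 - (1/p).toReal) * lpNorm p x := by
  have habs : ∀ i, |M.mulVec x i| ≤ ∑ j, |M i j| * |x j| := by
    intro i
    simp only [Matrix.mulVec, dotProduct]
    calc |∑ j, M i j * x j| ≤ ∑ j, |M i j * x j| := Finset.abs_sum_le_sum_abs _ _
      _ = ∑ j, |M i j| * |x j| := by simp [abs_mul]
  unfold lpNorm
  by_cases h : p = ∞
  · simp only [h, if_true, one_div, ENNReal.inv_top, ENNReal.toReal_top, ENNReal.toReal_zero,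
      Real.rpow_zero, one_mul, sub_zero, Real.rpow_one]
    have hN : 0 ≤ ⨆ j, |x j| := le_trans (abs_nonneg (x (Classical.arbitrary β)))
      (le_ciSup (f := fun j => |x j|) (Set.Finite.bddAbove (Set.finite_range _))
        (Classical.arbitrary β))
    apply ciSup_le
    intro i
    calc |M.mulVec x i| ≤ ∑ j, |M i j| * |x j| := habs i
      _ ≤ ∑ j, |M i j| * (⨆ j', |x j'|) := Finset.sum_le_sum fun j _ =>
          mul_le_mul_of_nonneg_left
            (le_ciSup (f := fun j' => |x j'|) (Set.Finite.bddAbove (Set.finite_range _)) j)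
            (abs_nonneg _)
      _ = (∑ j, |M i j|) * (⨆ j', |x j'|) := by rw [Finset.sum_mul]
      _ ≤ Coo * ⨆ j', |x j'| := mul_le_mul_of_nonneg_right (hrow i) hN
  · simp only [h, if_false]
    have hne0 : p ≠ 0 := by intro h0; rw [h0] at hp; simp at hp
    set t := p.toReal with htdef
    have ht1 : 1 ≤ t := by
      rw [← ENNReal.toReal_one]; exact ENNReal.toReal_mono h hp
    have ht0 : (0:ℝ) < t := lt_of_lt_of_le one_pos ht1
    have hinv : (1/p).toReal = 1/t := by
      rw [one_div, one_div, ENNReal.toReal_inv]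
    rw [hinv]
    -- main pth power estimate
    have key : ∑ i, |M.mulVec x i| ^ t ≤ Coo ^ (t-1) * C1 * ∑ j, |x j| ^ t := by
      have step1 : ∀ i, |M.mulVec x i| ^ t ≤ Coo ^ (t-1) * ∑ j, |M i j| * |x j| ^ t := by
        intro i
        calc |M.mulVec x i| ^ t ≤ (∑ j, |M i j| * |x j|) ^ t :=
              Real.rpow_le_rpow (abs_nonneg _) (habs i) ht0.le
          _ ≤ Coo ^ (t-1) * ∑ j, |M i j| * |x j| ^ t :=
              jensen_sum _ _ (fun j => abs_nonneg _) (fun j => abs_nonneg _) Coo (hrow i) t ht1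
      calc ∑ i, |M.mulVec x i| ^ t ≤ ∑ i, Coo ^ (t-1) * ∑ j, |M i j| * |x j| ^ t :=
            Finset.sum_le_sum fun i _ => step1 i
        _ = Coo ^ (t-1) * ∑ j, (∑ i, |M i j|) * |x j| ^ t := by
            rw [← Finset.mul_sum, Finset.sum_comm]
            congr 1; refine Finset.sum_congr rfl fun j _ => ?_; rw [Finset.sum_mul]
        _ ≤ Coo ^ (t-1) * ∑ j, C1 * |x j| ^ t := by
            apply mul_le_mul_of_nonneg_left _ (Real.rpow_nonneg hCoo _)
            exact Finset.sum_le_sum fun j _ =>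
              mul_le_mul_of_nonneg_right (hcol j) (Real.rpow_nonneg (abs_nonneg _) _)
        _ = Coo ^ (t-1) * C1 * ∑ j, |x j| ^ t := by rw [← Finset.mul_sum]; ring
    have hLnn : 0 ≤ ∑ i, |M.mulVec x i| ^ t :=
      Finset.sum_nonneg fun i _ => Real.rpow_nonneg (abs_nonneg _) _
    have hxnn : 0 ≤ ∑ j, |x j| ^ t :=
      Finset.sum_nonneg fun j _ => Real.rpow_nonneg (abs_nonneg _) _
    calc (∑ i, |M.mulVec x i| ^ t) ^ (1/t)
        ≤ (Coo ^ (t-1) * C1 * ∑ j, |x j| ^ t) ^ (1/t) :=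
          Real.rpow_le_rpow hLnn key (by positivity)
      _ = C1 ^ (1/t) * Coo ^ (1 - 1/t) * (∑ j, |x j| ^ t) ^ (1/t) := by
          rw [Real.mul_rpow (mul_nonneg (Real.rpow_nonneg hCoo _) hC1) hxnn,
            Real.mul_rpow (Real.rpow_nonneg hCoo _) hC1, ← Real.rpow_mul hCoo]
          have : (t-1) * (1/t) = 1 - 1/t := by field_simp
          rw [this]; ring

def tIdx (f : ℕ) (a b : ℤ) : Fin (2*f+1) :=
  ⟨min ((f:ℤ) - b + a).toNat (2*f), by omega⟩

lemma T2_abs_eq (f d : ℕ) (v : Fin (2*f+1) → Fin (2*f+1) → ℝ) (P Q : Fin d × Fin d) :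
    |T2 f d v P Q| =
      if (-(f:ℤ) ≤ (Q.1:ℤ) - (P.1:ℤ) ∧ (Q.1:ℤ) - (P.1:ℤ) ≤ (f:ℤ)) ∧
         (-(f:ℤ) ≤ (Q.2:ℤ) - (P.2:ℤ) ∧ (Q.2:ℤ) - (P.2:ℤ) ≤ (f:ℤ)) then
        |v (tIdx f (P.1:ℤ) (Q.1:ℤ)) (tIdx f (P.2:ℤ) (Q.2:ℤ))| else 0 := by
  unfold T2 T1 tIdx
  split_ifs with h1 h2 h3 h4 h5
  · congr 2 <;> [skip; skip] <;> apply Fin.ext <;> simp <;> omega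
  · exact absurd ⟨h1, h2⟩ h3
  · exact absurd h4.2 (by tauto)
  · simp
  · exact absurd h5.1 h1
  · simp

lemma T2_row_sum (f d : ℕ) (v : Fin (2*f+1) → Fin (2*f+1) → ℝ) (P : Fin d × Fin d) :
    ∑ Q, |T2 f d v P Q| ≤ ∑ i', ∑ j', |v i' j'| := by
  classical
  set S : Finset (Fin d × Fin d) := Finset.univ.filter (fun Q =>
    (-(f:ℤ) ≤ (Q.1:ℤ) - (P.1:ℤ) ∧ (Q.1:ℤ) - (P.1:ℤ) ≤ (f:ℤ)) ∧
    (-(f:ℤ) ≤ (Q.2:ℤ) - (P.2:ℤ) ∧ (Q.2:ℤ) - (P.2:ℤ) ≤ (f:ℤ))) with hS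
  have h1 : ∑ Q, |T2 f d v P Q|
      = ∑ Q ∈ S, |v (tIdx f (P.1:ℤ) (Q.1:ℤ)) (tIdx f (P.2:ℤ) (Q.2:ℤ))| := by
    rw [hS, Finset.sum_filter]
    exact Finset.sum_congr rfl fun Q _ => T2_abs_eq f d v P Q
  have hinj : Set.InjOn (fun Q : Fin d × Fin d =>
      (tIdx f (P.1:ℤ) (Q.1:ℤ), tIdx f (P.2:ℤ) (Q.2:ℤ))) S := by
    intro Q hQ Q' hQ' h
    simp only [hS, Finset.mem_coe, Finset.mem_filter] at hQ hQ'
    have e1 := congrArg (fun y => (y.1 : ℕ)) h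
    have e2 := congrArg (fun y => (y.2 : ℕ)) h
    simp only [tIdx] at e1 e2
    have : (Q.1:ℕ) = (Q'.1:ℕ) ∧ (Q.2:ℕ) = (Q'.2:ℕ) := by
      constructor <;> omega
    exact Prod.ext (Fin.ext this.1) (Fin.ext this.2)
  calc ∑ Q, |T2 f d v P Q|
      = ∑ y ∈ S.image (fun Q : Fin d × Fin d =>
          (tIdx f (P.1:ℤ) (Q.1:ℤ), tIdx f (P.2:ℤ) (Q.2:ℤ))), |v y.1 y.2| := by
        rw [h1, Finset.sum_image (fun a ha b hb => hinj ha hb)]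
    _ ≤ ∑ y : Fin (2*f+1) × Fin (2*f+1), |v y.1 y.2| :=
        Finset.sum_le_sum_of_subset_of_nonneg (Finset.subset_univ _)
          (fun y _ _ => abs_nonneg _)
    _ = ∑ i', ∑ j', |v i' j'| := by rw [Fintype.sum_prod_type]

lemma T2_col_sum (f d : ℕ) (v : Fin (2*f+1) → Fin (2*f+1) → ℝ) (Q : Fin d × Fin d) :
    ∑ P, |T2 f d v P Q| ≤ ∑ i', ∑ j', |v i' j'| := by
  classical
  set S : Finset (Fin d × Fin d) := Finset.univ.filter (fun P =>
    (-(f:ℤ) ≤ (Q.1:ℤ) - (P.1:ℤ) ∧ (Q.1:ℤ) - (P.1:ℤ) ≤ (f:ℤ)) ∧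
    (-(f:ℤ) ≤ (Q.2:ℤ) - (P.2:ℤ) ∧ (Q.2:ℤ) - (P.2:ℤ) ≤ (f:ℤ))) with hS
  have h1 : ∑ P, |T2 f d v P Q|
      = ∑ P ∈ S, |v (tIdx f (P.1:ℤ) (Q.1:ℤ)) (tIdx f (P.2:ℤ) (Q.2:ℤ))| := by
    rw [hS, Finset.sum_filter]
    exact Finset.sum_congr rfl fun P _ => T2_abs_eq f d v P Q
  have hinj : Set.InjOn (fun P : Fin d × Fin d =>
      (tIdx f (P.1:ℤ) (Q.1:ℤ), tIdx f (P.2:ℤ) (Q.2:ℤ))) S := by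
    intro P hP P' hP' h
    simp only [hS, Finset.mem_coe, Finset.mem_filter] at hP hP'
    have e1 := congrArg (fun y => (y.1 : ℕ)) h
    have e2 := congrArg (fun y => (y.2 : ℕ)) h
    simp only [tIdx] at e1 e2
    have : (P.1:ℕ) = (P'.1:ℕ) ∧ (P.2:ℕ) = (P'.2:ℕ) := by
      constructor <;> omega
    exact Prod.ext (Fin.ext this.1) (Fin.ext this.2)
  calc ∑ P, |T2 f d v P Q|
      = ∑ y ∈ S.image (fun P : Fin d × Fin d =>
          (tIdx f (P.1:ℤ) (Q.1:ℤ), tIdx f (P.2:ℤ) (Q.2:ℤ))), |v y.1 y.2| := by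
        rw [h1, Finset.sum_image (fun a ha b hb => hinj ha hb)]
    _ ≤ ∑ y : Fin (2*f+1) × Fin (2*f+1), |v y.1 y.2| :=
        Finset.sum_le_sum_of_subset_of_nonneg (Finset.subset_univ _)
          (fun y _ _ => abs_nonneg _)
    _ = ∑ i', ∑ j', |v i' j'| := by rw [Fintype.sum_prod_type]

theorem stmt6
    (f d cin cout : ℕ) (hf : 0 < f) (hd : 0 < d) (hfd : f + 1 ≤ d)
    (hcin : 0 < cin) (hcout : 0 < cout)
    (w : Fin cout → Fin cin → Fin (2*f+1) → Fin (2*f+1) → ℝ)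
    (p : ℝ≥0∞) (hp : 1 ≤ p) :
    opNormP p (Tmulti f d cin cout w)
      ≤ (⨆ j : Fin cin, ∑ i, ∑ i', ∑ j', |w i j i' j'|) ^ ((1/p).toReal)
        * (⨆ i : Fin cout, ∑ j, ∑ i', ∑ j', |w i j i' j'|) ^ (1 - (1/p).toReal) := by
  haveI : Nonempty (Fin d) := ⟨⟨0, hd⟩⟩
  haveI : Nonempty (Fin cin) := ⟨⟨0, hcin⟩⟩
  haveI : Nonempty (Fin cout) := ⟨⟨0, hcout⟩⟩
  set C1 := ⨆ j : Fin cin, ∑ i, ∑ i', ∑ j', |w i j i' j'| with hC1def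
  set Coo := ⨆ i : Fin cout, ∑ j, ∑ i', ∑ j', |w i j i' j'| with hCoodef
  have hbdd1 : BddAbove (Set.range fun j : Fin cin => ∑ i, ∑ i', ∑ j', |w i j i' j'|) :=
    Set.Finite.bddAbove (Set.finite_range _)
  have hbddo : BddAbove (Set.range fun i : Fin cout => ∑ j, ∑ i', ∑ j', |w i j i' j'|) :=
    Set.Finite.bddAbove (Set.finite_range _)
  have hle1 : ∀ j, ∑ i, ∑ i', ∑ j', |w i j i' j'| ≤ C1 := fun j => le_ciSup hbdd1 j
  have hleo : ∀ i, ∑ j, ∑ i', ∑ j', |w i j i' j'| ≤ Coo := fun i => le_ciSup hbddo i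
  have hC1 : 0 ≤ C1 := le_trans
    (Finset.sum_nonneg fun i _ => Finset.sum_nonneg fun i' _ =>
      Finset.sum_nonneg fun j' _ => abs_nonneg _) (hle1 (Classical.arbitrary _))
  have hCoo : 0 ≤ Coo := le_trans
    (Finset.sum_nonneg fun j _ => Finset.sum_nonneg fun i' _ =>
      Finset.sum_nonneg fun j' _ => abs_nonneg _) (hleo (Classical.arbitrary _))
  have hrow : ∀ P : Fin cout × Fin d × Fin d,
      ∑ Q, |Tmulti f d cin cout w P Q| ≤ Coo := by
    intro P
    calc ∑ Q : Fin cin × Fin d × Fin d, |Tmulti f d cin cout w P Q|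
        = ∑ j : Fin cin, ∑ Q2 : Fin d × Fin d, |T2 f d (w P.1 j) P.2 Q2| := by
          rw [Fintype.sum_prod_type]; rfl
      _ ≤ ∑ j : Fin cin, ∑ i', ∑ j', |w P.1 j i' j'| :=
          Finset.sum_le_sum fun j _ => T2_row_sum f d (w P.1 j) P.2
      _ ≤ Coo := hleo P.1
  have hcol : ∀ Q : Fin cin × Fin d × Fin d,
      ∑ P, |Tmulti f d cin cout w P Q| ≤ C1 := by
    intro Q
    calc ∑ P : Fin cout × Fin d × Fin d, |Tmulti f d cin cout w P Q|
        = ∑ i : Fin cout, ∑ P2 : Fin d × Fin d, |T2 f d (w i Q.1) P2 Q.2| := by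
          rw [Fintype.sum_prod_type]; rfl
      _ ≤ ∑ i : Fin cout, ∑ i', ∑ j', |w i Q.1 i' j'| :=
          Finset.sum_le_sum fun i _ => T2_col_sum f d (w i Q.1) Q.2
      _ ≤ C1 := hle1 Q.1
  have hK : 0 ≤ C1 ^ (1/p).toReal * Coo ^ (1 - (1/p).toReal) :=
    mul_nonneg (Real.rpow_nonneg hC1 _) (Real.rpow_nonneg hCoo _)
  apply Real.sSup_le _ hK
  rintro y ⟨x, hx, rfl⟩
  have hxpos : 0 < lpNorm p x := lpNorm_pos hp hx
  rw [div_le_iff₀ hxpos]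
  exact lpNorm_mulVec_le (Tmulti f d cin cout w) hC1 hCoo hrow hcol hp x

end
end

section
/- Let q = (q_n)_{n=0}^∞ be a bounded sequence of positive integers with q₀ = 1, let c^{(n)} = (c^{(n)}_0,…,c^{(n)}_{q_n}) be channel numbers with sup_n ‖c^{(n)}‖_∞ < +∞, let f^{(n)} = (f^{(n)}_1,…,f^{(n)}_{q_n}) be filter-mask half-sizes with sup_n ‖f^{(n)}‖_∞ < +∞, let w^{(n)}_m = (w^{(n)}_{m,i,j})_{i,j} with w^{(n)}_{m,i,j} ∈ ℝ^{(2f^{(n)}_m+1)×(2f^{(n)}_m+1)} be the filter masks and b^{(n)}_m = (b^{(n)}_{m,1}E_d,…,b^{(n)}_{m,c^{(n)}_m}E_d) the bias tensors of the n-th residual block of a deep ResNet, with w^{(0)}_1 = w_s the sampling-layer mask, and let p ∈ [1,+∞]. For each n and m set N^{(n)}_m = (max_{1≤j≤c^{(n)}_{m−1}} ∑_{i=1}^{c^{(n)}_m} ∑_{i',j'} |w^{(n)}_{m,i,j,i',j'}|)^{1/p} (max_{1≤i≤c^{(n)}_m} ∑_{j=1}^{c^{(n)}_{m−1}} ∑_{i',j'}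 |w^{(n)}_{m,i,j,i',j'}|)^{1−1/p}. If ∑_{n=0}^∞ ∏_{m=1}^{q_n} N^{(n)}_m < +∞ and ∑_{n=0}^∞ ∑_{m=1}^{q_n} (∏_{m'=m+1}^{q_n} N^{(n)}_{m'}) (∑_{i=1}^{c^{(n)}_m} |b^{(n)}_{m,i}|^p)^{1/p} < +∞, then the ResNet (without the final linear output layer) converges pointwise on [0,1]^{d×d×c_in} as the number of residual blocks n tends to infinity. -/
open Filter Matrix Topology
open scoped ENNReal

noncomputable section

/-! ### Auxiliary material for the proof of `stmt7` -/

section Stmt7Aux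

open Finset

/-- Index bound for the mask index appearing in `T1`/`T2`. -/
private lemma aux_idx_lt {f : ℕ} {A B : ℤ} (h : -(f:ℤ) ≤ A - B ∧ A - B ≤ (f:ℤ)) :
    ((f:ℤ) - A + B).toNat < 2*f+1 := by omega

lemma aux_one_le_toReal {p : ℝ≥0∞} (hp : 1 ≤ p) (hne : p ≠ ∞) : 1 ≤ p.toReal := by
  rw [← ENNReal.toReal_one]
  exact ENNReal.toReal_mono hne hp

lemma aux_toReal_pos {p : ℝ≥0∞} (hp : 1 ≤ p) (hne : p ≠ ∞) : 0 < p.toReal :=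
  lt_of_lt_of_le one_pos (aux_one_le_toReal hp hne)

lemma aux_inv_toReal {p : ℝ≥0∞} (hne : p ≠ ∞) : (1/p).toReal = 1 / p.toReal := by
  rw [one_div, one_div, ENNReal.toReal_inv]

lemma aux_one_div_top : ((1 : ℝ≥0∞)/∞).toReal = 0 := by
  simp

section lp

variable {p : ℝ≥0∞} {ι : Type*} [Fintype ι]

lemma aux_lpNorm_nonneg (x : ι → ℝ) : 0 ≤ lpNorm p x := by
  unfold lpNorm
  split_ifs
  · exact Real.iSup_nonneg fun i => abs_nonneg _
  · exact Real.rpow_nonneg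
      (Finset.sum_nonneg fun i _ => Real.rpow_nonneg (abs_nonneg _) _) _

lemma aux_lpNorm_coord (hp : 1 ≤ p) (x : ι → ℝ) (i : ι) : |x i| ≤ lpNorm p x := by
  unfold lpNorm
  split_ifs with h
  · exact le_ciSup (f := fun i => |x i|) (Finite.bddAbove_range _) i
  · have hpr : 0 < p.toReal := aux_toReal_pos hp h
    have h1 : |x i| = (|x i| ^ p.toReal) ^ (1 / p.toReal) := by
      rw [← Real.rpow_mul (abs_nonneg _), mul_one_div_cancel hpr.ne', Real.rpow_one]
    rw [h1]
    exact Real.rpow_le_rpow (Real.rpow_nonneg (abs_nonneg _) _)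
      (Finset.single_le_sum (fun j _ => Real.rpow_nonneg (abs_nonneg _) _) (Finset.mem_univ i))
      (by positivity)

lemma aux_lpNorm_mono [Nonempty ι] (hp : 1 ≤ p) {x y : ι → ℝ}
    (h : ∀ i, |x i| ≤ |y i|) : lpNorm p x ≤ lpNorm p y := by
  unfold lpNorm
  split_ifs with hh
  · exact ciSup_le fun i => (h i).trans (le_ciSup (f := fun i => |y i|) (Finite.bddAbove_range _) i)
  · refine Real.rpow_le_rpow (Finset.sum_nonneg fun i _ => Real.rpow_nonneg (abs_nonneg _) _)
      (Finset.sum_le_sum fun i _ => ?_) (by positivity)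
    exact Real.rpow_le_rpow (abs_nonneg _) (h i) ENNReal.toReal_nonneg

lemma aux_lpNorm_add_le [Nonempty ι] (hp : 1 ≤ p) (x y : ι → ℝ) :
    lpNorm p (fun i => x i + y i) ≤ lpNorm p x + lpNorm p y := by
  unfold lpNorm
  split_ifs with hh
  · refine ciSup_le fun i => (abs_add_le _ _).trans (add_le_add ?_ ?_)
    · exact le_ciSup (f := fun i => |x i|) (Finite.bddAbove_range _) i
    · exact le_ciSup (f := fun i => |y i|) (Finite.bddAbove_range _) i
  · exact Real.Lp_add_le Finset.univ x y (aux_one_le_toReal hp hh)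

end lp

/-- The `ℓ_p` norm of a `cc × d × d` tensor. -/
def tnorm (p : ℝ≥0∞) {cc d : ℕ} (x : Fin cc → Fin d → Fin d → ℝ) : ℝ :=
  lpNorm p (fun t : Fin cc × Fin d × Fin d => x t.1 t.2.1 t.2.2)

section tnorm

variable {p : ℝ≥0∞} {cc d : ℕ}

lemma aux_tnorm_nonneg (x : Fin cc → Fin d → Fin d → ℝ) : 0 ≤ tnorm p x :=
  aux_lpNorm_nonneg _

lemma aux_tnorm_coord (hp : 1 ≤ p) (x : Fin cc → Fin d → Fin d → ℝ)
    (i : Fin cc) (a b : Fin d) : |x i a b| ≤ tnorm p x :=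
  aux_lpNorm_coord hp (fun t : Fin cc × Fin d × Fin d => x t.1 t.2.1 t.2.2) (i, a, b)

lemma aux_nonempty_idx (hc : 0 < cc) (hd : 0 < d) : Nonempty (Fin cc × Fin d × Fin d) :=
  ⟨⟨⟨0, hc⟩, ⟨0, hd⟩, ⟨0, hd⟩⟩⟩

lemma aux_tnorm_mono (hp : 1 ≤ p) (hc : 0 < cc) (hd : 0 < d)
    {x y : Fin cc → Fin d → Fin d → ℝ} (h : ∀ i a b, |x i a b| ≤ |y i a b|) :
    tnorm p x ≤ tnorm p y := by
  haveI := aux_nonempty_idx hc hd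
  exact aux_lpNorm_mono hp fun t => h t.1 t.2.1 t.2.2

lemma aux_tnorm_add_le (hp : 1 ≤ p) (hc : 0 < cc) (hd : 0 < d)
    (x y : Fin cc → Fin d → Fin d → ℝ) :
    tnorm p (fun i a b => x i a b + y i a b) ≤ tnorm p x + tnorm p y := by
  haveI := aux_nonempty_idx hc hd
  exact aux_lpNorm_add_le hp _ _

lemma aux_tnorm_castChan {cc' : ℕ} (h : cc = cc') (x : Fin cc → Fin d → Fin d → ℝ) :
    tnorm p (castChan h x) = tnorm p x := by
  subst h; rfl

lemma aux_tnorm_const_bias (hp : 1 ≤ p) (hc : 0 < cc) (hd : 0 < d) (βv : Fin cc → ℝ) :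
    tnorm (d := d) p (fun i _ _ => βv i)
      ≤ ((d:ℝ)^2) ^ ((1/p).toReal) * lpNorm p βv := by
  haveI := aux_nonempty_idx hc hd
  by_cases hpe : p = ∞
  · subst hpe
    rw [aux_one_div_top, Real.rpow_zero, one_mul]
    unfold tnorm lpNorm
    rw [if_pos rfl, if_pos rfl]
    exact ciSup_le fun t => le_ciSup (f := fun i => |βv i|) (Finite.bddAbove_range _) t.1
  · have hpr : 0 < p.toReal := aux_toReal_pos hp hpe
    unfold tnorm lpNorm
    rw [if_neg hpe, if_neg hpe]
    have hsum : ∑ t : Fin cc × Fin d × Fin d, |βv t.1| ^ p.toReal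
        = (d:ℝ)^2 * ∑ i, |βv i| ^ p.toReal := by
      rw [Fintype.sum_prod_type]
      simp only [Finset.sum_const, Finset.card_univ, Fintype.card_prod, Fintype.card_fin,
        nsmul_eq_mul]
      rw [← Finset.mul_sum]
      push_cast
      ring
    rw [hsum, Real.mul_rpow (by positivity)
      (Finset.sum_nonneg fun i _ => Real.rpow_nonneg (abs_nonneg _) _),
      aux_inv_toReal hpe]

lemma aux_Nfactor_nonneg (p : ℝ≥0∞) {f cin cout : ℕ}
    (w : Fin cout → Fin cin → Fin (2*f+1) → Fin (2*f+1) → ℝ) :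
    0 ≤ Nfactor p w := by
  refine mul_nonneg (Real.rpow_nonneg ?_ _) (Real.rpow_nonneg ?_ _) <;>
  · exact Real.iSup_nonneg fun _ => Finset.sum_nonneg fun _ _ =>
      Finset.sum_nonneg fun _ _ => Finset.sum_nonneg fun _ _ => abs_nonneg _

end tnorm

/-- Summing nonnegative values through a partially defined injection. -/
lemma aux_sum_dite_le {D K : ℕ} (hK : 0 < K) (cond : Fin D → Prop) [DecidablePred cond]
    (u : ∀ s, cond s → Fin K) (hinj : ∀ s s' hs hs', u s hs = u s' hs' → s = s')
    (g : Fin K → ℝ) (hg : ∀ k, 0 ≤ g k) :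
    (∑ s, if h : cond s then g (u s h) else 0) ≤ ∑ k, g k := by
  haveI : Nonempty (Fin K) := Fin.pos_iff_nonempty.mp hK
  classical
  set u' : Fin D → Fin K := fun s => if h : cond s then u s h else Classical.arbitrary _ with hu'
  have h1 : (∑ s, if h : cond s then g (u s h) else 0)
      = ∑ s ∈ Finset.univ.filter cond, g (u' s) := by
    rw [Finset.sum_filter]
    refine Finset.sum_congr rfl fun s _ => ?_
    by_cases h : cond s <;> simp [u', h]
  have h2 : ∀ x ∈ Finset.univ.filter cond, ∀ y ∈ Finset.univ.filter cond,
      u' x = u' y → x = y := by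
    intro s hs t ht he
    have hcs : cond s := (Finset.mem_filter.mp hs).2
    have hct : cond t := (Finset.mem_filter.mp ht).2
    rw [hu'] at he
    simp only [dif_pos hcs, dif_pos hct] at he
    exact hinj s t hcs hct he
  rw [h1, ← Finset.sum_image h2]
  exact Finset.sum_le_sum_of_subset_of_nonneg (Finset.subset_univ _) fun k _ _ => hg k

section Toeplitz

variable {f d : ℕ}

lemma aux_T1_rowsum (f d : ℕ) (u : Fin (2*f+1) → ℝ) (b : Fin d) :
    ∑ t : Fin d, |T1 f d u b t| ≤ ∑ j', |u j'| := by
  have h1 : ∀ t : Fin d, |T1 f d u b t|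
      = if h : (-(f:ℤ) ≤ ((t:ℕ):ℤ) - ((b:ℕ):ℤ) ∧ ((t:ℕ):ℤ) - ((b:ℕ):ℤ) ≤ (f:ℤ))
        then |u ⟨((f:ℤ) - ((t:ℕ):ℤ) + ((b:ℕ):ℤ)).toNat, aux_idx_lt h⟩| else 0 := by
    intro t
    simp only [T1, apply_dite abs, abs_zero]
  calc ∑ t : Fin d, |T1 f d u b t|
      = ∑ t : Fin d, if h : (-(f:ℤ) ≤ ((t:ℕ):ℤ) - ((b:ℕ):ℤ) ∧ ((t:ℕ):ℤ) - ((b:ℕ):ℤ) ≤ (f:ℤ))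
        then |u ⟨((f:ℤ) - ((t:ℕ):ℤ) + ((b:ℕ):ℤ)).toNat, aux_idx_lt h⟩| else 0 :=
      Finset.sum_congr rfl fun t _ => h1 t
    _ ≤ ∑ j', |u j'| := by
      refine aux_sum_dite_le (K := 2*f+1) (Nat.succ_pos _)
        (fun t : Fin d => (-(f:ℤ) ≤ ((t:ℕ):ℤ) - ((b:ℕ):ℤ) ∧ ((t:ℕ):ℤ) - ((b:ℕ):ℤ) ≤ (f:ℤ)))
        (fun t h => ⟨((f:ℤ) - ((t:ℕ):ℤ) + ((b:ℕ):ℤ)).toNat, aux_idx_lt h⟩)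
        ?_ (fun j' => |u j'|) (fun k => abs_nonneg _)
      intro s s' hs hs' he
      have hv := congrArg Fin.val he
      simp only at hv
      apply Fin.ext
      omega

lemma aux_T1_colsum (f d : ℕ) (u : Fin (2*f+1) → ℝ) (b : Fin d) :
    ∑ t : Fin d, |T1 f d u t b| ≤ ∑ j', |u j'| := by
  have h1 : ∀ t : Fin d, |T1 f d u t b|
      = if h : (-(f:ℤ) ≤ ((b:ℕ):ℤ) - ((t:ℕ):ℤ) ∧ ((b:ℕ):ℤ) - ((t:ℕ):ℤ) ≤ (f:ℤ))
        then |u ⟨((f:ℤ) - ((b:ℕ):ℤ) + ((t:ℕ):ℤ)).toNat, aux_idx_lt h⟩| else 0 := by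
    intro t
    simp only [T1, apply_dite abs, abs_zero]
  calc ∑ t : Fin d, |T1 f d u t b|
      = ∑ t : Fin d, if h : (-(f:ℤ) ≤ ((b:ℕ):ℤ) - ((t:ℕ):ℤ) ∧ ((b:ℕ):ℤ) - ((t:ℕ):ℤ) ≤ (f:ℤ))
        then |u ⟨((f:ℤ) - ((b:ℕ):ℤ) + ((t:ℕ):ℤ)).toNat, aux_idx_lt h⟩| else 0 :=
      Finset.sum_congr rfl fun t _ => h1 t
    _ ≤ ∑ j', |u j'| := by
      refine aux_sum_dite_le (K := 2*f+1) (Nat.succ_pos _)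
        (fun t : Fin d => (-(f:ℤ) ≤ ((b:ℕ):ℤ) - ((t:ℕ):ℤ) ∧ ((b:ℕ):ℤ) - ((t:ℕ):ℤ) ≤ (f:ℤ)))
        (fun t h => ⟨((f:ℤ) - ((b:ℕ):ℤ) + ((t:ℕ):ℤ)).toNat, aux_idx_lt h⟩)
        ?_ (fun j' => |u j'|) (fun k => abs_nonneg _)
      intro s s' hs hs' he
      have hv := congrArg Fin.val he
      simp only at hv
      apply Fin.ext
      omega

lemma aux_T2_rowsum (f d : ℕ) (v : Fin (2*f+1) → Fin (2*f+1) → ℝ) (ab : Fin d × Fin d) :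
    ∑ st : Fin d × Fin d, |T2 f d v ab st| ≤ ∑ i', ∑ j', |v i' j'| := by
  rw [Fintype.sum_prod_type]
  have key : ∀ s : Fin d, ∑ t : Fin d, |T2 f d v ab (s, t)|
      ≤ if h : (-(f:ℤ) ≤ ((s:ℕ):ℤ) - ((ab.1:ℕ):ℤ) ∧ ((s:ℕ):ℤ) - ((ab.1:ℕ):ℤ) ≤ (f:ℤ))
        then ∑ j', |v ⟨((f:ℤ) - ((s:ℕ):ℤ) + ((ab.1:ℕ):ℤ)).toNat, aux_idx_lt h⟩ j'| else 0 := by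
    intro s
    by_cases h : (-(f:ℤ) ≤ ((s:ℕ):ℤ) - ((ab.1:ℕ):ℤ) ∧ ((s:ℕ):ℤ) - ((ab.1:ℕ):ℤ) ≤ (f:ℤ))
    · rw [dif_pos h]
      have he : ∀ t : Fin d, T2 f d v ab (s, t)
          = T1 f d (v ⟨((f:ℤ) - ((s:ℕ):ℤ) + ((ab.1:ℕ):ℤ)).toNat, aux_idx_lt h⟩) ab.2 t := by
        intro t
        simp only [T2, dif_pos h]
      calc ∑ t : Fin d, |T2 f d v ab (s, t)|
          = ∑ t : Fin d, |T1 f d (v ⟨((f:ℤ) - ((s:ℕ):ℤ) + ((ab.1:ℕ):ℤ)).toNat, aux_idx_lt h⟩) ab.2 t| :=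
          Finset.sum_congr rfl fun t _ => by rw [he t]
        _ ≤ _ := aux_T1_rowsum f d _ ab.2
    · rw [dif_neg h]
      have he : ∀ t : Fin d, T2 f d v ab (s, t) = 0 := by
        intro t
        simp only [T2, dif_neg h]
      refine le_of_eq (Finset.sum_eq_zero fun t _ => ?_)
      rw [he t, abs_zero]
  calc ∑ s : Fin d, ∑ t : Fin d, |T2 f d v ab (s, t)|
      ≤ ∑ s : Fin d, if h : (-(f:ℤ) ≤ ((s:ℕ):ℤ) - ((ab.1:ℕ):ℤ) ∧ ((s:ℕ):ℤ) - ((ab.1:ℕ):ℤ) ≤ (f:ℤ))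
        then ∑ j', |v ⟨((f:ℤ) - ((s:ℕ):ℤ) + ((ab.1:ℕ):ℤ)).toNat, aux_idx_lt h⟩ j'| else 0 :=
      Finset.sum_le_sum fun s _ => key s
    _ ≤ ∑ i', ∑ j', |v i' j'| := by
      refine aux_sum_dite_le (K := 2*f+1) (Nat.succ_pos _)
        (fun s : Fin d => (-(f:ℤ) ≤ ((s:ℕ):ℤ) - ((ab.1:ℕ):ℤ) ∧ ((s:ℕ):ℤ) - ((ab.1:ℕ):ℤ) ≤ (f:ℤ)))
        (fun s h => ⟨((f:ℤ) - ((s:ℕ):ℤ) + ((ab.1:ℕ):ℤ)).toNat, aux_idx_lt h⟩)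
        ?_ (fun i' => ∑ j', |v i' j'|)
        (fun k => Finset.sum_nonneg fun _ _ => abs_nonneg _)
      intro s s' hs hs' he
      have hv := congrArg Fin.val he
      simp only at hv
      apply Fin.ext
      omega

lemma aux_T2_colsum (f d : ℕ) (v : Fin (2*f+1) → Fin (2*f+1) → ℝ) (ab : Fin d × Fin d) :
    ∑ st : Fin d × Fin d, |T2 f d v st ab| ≤ ∑ i', ∑ j', |v i' j'| := by
  rw [Fintype.sum_prod_type]
  have key : ∀ s : Fin d, ∑ t : Fin d, |T2 f d v (s, t) ab|
      ≤ if h : (-(f:ℤ) ≤ ((ab.1:ℕ):ℤ) - ((s:ℕ):ℤ) ∧ ((ab.1:ℕ):ℤ) - ((s:ℕ):ℤ) ≤ (f:ℤ))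
        then ∑ j', |v ⟨((f:ℤ) - ((ab.1:ℕ):ℤ) + ((s:ℕ):ℤ)).toNat, aux_idx_lt h⟩ j'| else 0 := by
    intro s
    by_cases h : (-(f:ℤ) ≤ ((ab.1:ℕ):ℤ) - ((s:ℕ):ℤ) ∧ ((ab.1:ℕ):ℤ) - ((s:ℕ):ℤ) ≤ (f:ℤ))
    · rw [dif_pos h]
      have he : ∀ t : Fin d, T2 f d v (s, t) ab
          = T1 f d (v ⟨((f:ℤ) - ((ab.1:ℕ):ℤ) + ((s:ℕ):ℤ)).toNat, aux_idx_lt h⟩) t ab.2 := by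
        intro t
        simp only [T2, dif_pos h]
      calc ∑ t : Fin d, |T2 f d v (s, t) ab|
          = ∑ t : Fin d, |T1 f d (v ⟨((f:ℤ) - ((ab.1:ℕ):ℤ) + ((s:ℕ):ℤ)).toNat, aux_idx_lt h⟩) t ab.2| :=
          Finset.sum_congr rfl fun t _ => by rw [he t]
        _ ≤ _ := aux_T1_colsum f d _ ab.2
    · rw [dif_neg h]
      have he : ∀ t : Fin d, T2 f d v (s, t) ab = 0 := by
        intro t
        simp only [T2, dif_neg h]
      refine le_of_eq (Finset.sum_eq_zero fun t _ => ?_)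
      rw [he t, abs_zero]
  calc ∑ s : Fin d, ∑ t : Fin d, |T2 f d v (s, t) ab|
      ≤ ∑ s : Fin d, if h : (-(f:ℤ) ≤ ((ab.1:ℕ):ℤ) - ((s:ℕ):ℤ) ∧ ((ab.1:ℕ):ℤ) - ((s:ℕ):ℤ) ≤ (f:ℤ))
        then ∑ j', |v ⟨((f:ℤ) - ((ab.1:ℕ):ℤ) + ((s:ℕ):ℤ)).toNat, aux_idx_lt h⟩ j'| else 0 :=
      Finset.sum_le_sum fun s _ => key s
    _ ≤ ∑ i', ∑ j', |v i' j'| := by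
      refine aux_sum_dite_le (K := 2*f+1) (Nat.succ_pos _)
        (fun s : Fin d => (-(f:ℤ) ≤ ((ab.1:ℕ):ℤ) - ((s:ℕ):ℤ) ∧ ((ab.1:ℕ):ℤ) - ((s:ℕ):ℤ) ≤ (f:ℤ)))
        (fun s h => ⟨((f:ℤ) - ((ab.1:ℕ):ℤ) + ((s:ℕ):ℤ)).toNat, aux_idx_lt h⟩)
        ?_ (fun i' => ∑ j', |v i' j'|)
        (fun k => Finset.sum_nonneg fun _ _ => abs_nonneg _)
      intro s s' hs hs' he
      have hv := congrArg Fin.val he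
      simp only at hv
      apply Fin.ext
      omega

end Toeplitz

section ConvBound

open Finset

variable {p : ℝ≥0∞}

lemma aux_weighted_jensen {ι : Type*} [Fintype ι] (m z : ι → ℝ)
    (hm : ∀ i, 0 ≤ m i) (hz : ∀ i, 0 ≤ z i) {pr : ℝ} (hpr : 1 ≤ pr) :
    (∑ i, m i * z i) ^ pr ≤ (∑ i, m i) ^ (pr - 1) * ∑ i, m i * z i ^ pr := by
  have hpr0 : 0 < pr := lt_of_lt_of_le one_pos hpr
  have hA : 0 ≤ ∑ i, m i := Finset.sum_nonneg fun i _ => hm i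
  have hB : 0 ≤ ∑ i, m i * z i ^ pr :=
    Finset.sum_nonneg fun i _ => mul_nonneg (hm i) (Real.rpow_nonneg (hz i) _)
  have hL : 0 ≤ ∑ i, m i * z i := Finset.sum_nonneg fun i _ => mul_nonneg (hm i) (hz i)
  have h := Real.inner_le_weight_mul_Lp_of_nonneg Finset.univ hpr m z hm hz
  calc (∑ i, m i * z i) ^ pr
      ≤ ((∑ i, m i) ^ (1 - pr⁻¹) * (∑ i, m i * z i ^ pr) ^ pr⁻¹) ^ pr :=
        Real.rpow_le_rpow hL h hpr0.le
    _ = (∑ i, m i) ^ (pr - 1) * ∑ i, m i * z i ^ pr := by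
        rw [Real.mul_rpow (Real.rpow_nonneg hA _) (Real.rpow_nonneg hB _),
          ← Real.rpow_mul hA, ← Real.rpow_mul hB,
          show (1 - pr⁻¹) * pr = pr - 1 by field_simp,
          show pr⁻¹ * pr = 1 by field_simp, Real.rpow_one]

set_option maxHeartbeats 2000000 in
lemma aux_conv_tnorm_le (hp : 1 ≤ p) {f d cin cout : ℕ}
    (hd : 0 < d) (hcin : 0 < cin) (hcout : 0 < cout)
    (w : Fin cout → Fin cin → Fin (2*f+1) → Fin (2*f+1) → ℝ)
    (x : Fin cin → Fin d → Fin d → ℝ) :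
    tnorm p (convLayer f d cin cout w x) ≤ Nfactor p w * tnorm p x := by
  haveI hne1 := aux_nonempty_idx hcout hd
  haveI hne2 := aux_nonempty_idx hcin hd
  set CS : ℝ := ⨆ j : Fin cin, ∑ i, ∑ i', ∑ j', |w i j i' j'| with hCS
  set RS : ℝ := ⨆ i : Fin cout, ∑ j, ∑ i', ∑ j', |w i j i' j'| with hRS
  have hCS0 : 0 ≤ CS := Real.iSup_nonneg fun _ => Finset.sum_nonneg fun _ _ =>
    Finset.sum_nonneg fun _ _ => Finset.sum_nonneg fun _ _ => abs_nonneg _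
  have hRS0 : 0 ≤ RS := Real.iSup_nonneg fun _ => Finset.sum_nonneg fun _ _ =>
    Finset.sum_nonneg fun _ _ => Finset.sum_nonneg fun _ _ => abs_nonneg _
  have hrow : ∀ (i : Fin cout) (a b : Fin d),
      ∑ Q : Fin cin × Fin d × Fin d, |T2 f d (w i Q.1) (a, b) Q.2| ≤ RS := by
    intro i a b
    rw [Fintype.sum_prod_type]
    calc ∑ j, ∑ st : Fin d × Fin d, |T2 f d (w i j) (a, b) st|
        ≤ ∑ j, ∑ i', ∑ j', |w i j i' j'| :=
          Finset.sum_le_sum fun j _ => aux_T2_rowsum f d (w i j) (a, b)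
      _ ≤ RS := le_ciSup (f := fun i => ∑ j, ∑ i', ∑ j', |w i j i' j'|)
          (Finite.bddAbove_range _) i
  have hcol : ∀ (j : Fin cin) (st : Fin d × Fin d),
      ∑ P : Fin cout × Fin d × Fin d, |T2 f d (w P.1 j) P.2 st| ≤ CS := by
    intro j st
    rw [Fintype.sum_prod_type]
    calc ∑ i, ∑ ab : Fin d × Fin d, |T2 f d (w i j) ab st|
        ≤ ∑ i, ∑ i', ∑ j', |w i j i' j'| :=
          Finset.sum_le_sum fun i _ => aux_T2_colsum f d (w i j) st
      _ ≤ CS := le_ciSup (f := fun j => ∑ i, ∑ i', ∑ j', |w i j i' j'|)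
          (Finite.bddAbove_range _) j
  have hconv : ∀ (i : Fin cout) (a b : Fin d), convLayer f d cin cout w x i a b
      = ∑ Q : Fin cin × Fin d × Fin d, T2 f d (w i Q.1) (a, b) Q.2 * x Q.1 Q.2.1 Q.2.2 := by
    intro i a b
    calc convLayer f d cin cout w x i a b
        = ∑ j, ∑ st : Fin d × Fin d, T2 f d (w i j) (a, b) st * x j st.1 st.2 :=
          Finset.sum_congr rfl fun j _ => (Fintype.sum_prod_type (f := fun st : Fin d × Fin d =>
            T2 f d (w i j) (a, b) st * x j st.1 st.2)).symm
      _ = _ := (Fintype.sum_prod_type (f := fun Q : Fin cin × Fin d × Fin d =>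
          T2 f d (w i Q.1) (a, b) Q.2 * x Q.1 Q.2.1 Q.2.2)).symm
  have habs : ∀ (i : Fin cout) (a b : Fin d), |convLayer f d cin cout w x i a b|
      ≤ ∑ Q : Fin cin × Fin d × Fin d, |T2 f d (w i Q.1) (a, b) Q.2| * |x Q.1 Q.2.1 Q.2.2| := by
    intro i a b
    rw [hconv i a b]
    refine (Finset.abs_sum_le_sum_abs _ _).trans (le_of_eq ?_)
    exact Finset.sum_congr rfl fun Q _ => abs_mul _ _
  by_cases hpe : p = ∞
  · subst hpe
    have hNf : Nfactor ∞ w = RS := by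
      unfold Nfactor
      rw [aux_one_div_top, Real.rpow_zero, one_mul, sub_zero, Real.rpow_one]
    rw [hNf]
    unfold tnorm lpNorm
    rw [if_pos rfl, if_pos rfl]
    have hT0 : 0 ≤ ⨆ Q : Fin cin × Fin d × Fin d, |x Q.1 Q.2.1 Q.2.2| :=
      Real.iSup_nonneg fun _ => abs_nonneg _
    refine ciSup_le fun P => ?_
    calc |convLayer f d cin cout w x P.1 P.2.1 P.2.2|
        ≤ ∑ Q : Fin cin × Fin d × Fin d,
            |T2 f d (w P.1 Q.1) (P.2.1, P.2.2) Q.2| * |x Q.1 Q.2.1 Q.2.2| :=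
          habs P.1 P.2.1 P.2.2
      _ ≤ ∑ Q : Fin cin × Fin d × Fin d,
            |T2 f d (w P.1 Q.1) (P.2.1, P.2.2) Q.2|
              * (⨆ Q : Fin cin × Fin d × Fin d, |x Q.1 Q.2.1 Q.2.2|) := by
          refine Finset.sum_le_sum fun Q _ => mul_le_mul_of_nonneg_left ?_ (abs_nonneg _)
          exact le_ciSup (f := fun Q : Fin cin × Fin d × Fin d => |x Q.1 Q.2.1 Q.2.2|)
            (Finite.bddAbove_range _) Q
      _ = (∑ Q : Fin cin × Fin d × Fin d, |T2 f d (w P.1 Q.1) (P.2.1, P.2.2) Q.2|)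
            * (⨆ Q : Fin cin × Fin d × Fin d, |x Q.1 Q.2.1 Q.2.2|) :=
          (Finset.sum_mul _ _ _).symm
      _ ≤ RS * (⨆ Q : Fin cin × Fin d × Fin d, |x Q.1 Q.2.1 Q.2.2|) :=
          mul_le_mul_of_nonneg_right (hrow P.1 P.2.1 P.2.2) hT0
  · have hpr1 : 1 ≤ p.toReal := aux_one_le_toReal hp hpe
    have hpr0 : 0 < p.toReal := lt_of_lt_of_le one_pos hpr1
    set pr : ℝ := p.toReal with hprdef
    set T : ℝ := ∑ Q : Fin cin × Fin d × Fin d, |x Q.1 Q.2.1 Q.2.2| ^ pr with hT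
    have hT0 : 0 ≤ T := Finset.sum_nonneg fun Q _ => Real.rpow_nonneg (abs_nonneg _) _
    have main : ∑ P : Fin cout × Fin d × Fin d,
        |convLayer f d cin cout w x P.1 P.2.1 P.2.2| ^ pr ≤ RS ^ (pr - 1) * (CS * T) := by
      have step : ∀ P : Fin cout × Fin d × Fin d,
          |convLayer f d cin cout w x P.1 P.2.1 P.2.2| ^ pr
            ≤ RS ^ (pr - 1) * ∑ Q : Fin cin × Fin d × Fin d,
                |T2 f d (w P.1 Q.1) (P.2.1, P.2.2) Q.2| * |x Q.1 Q.2.1 Q.2.2| ^ pr := by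
        intro P
        calc |convLayer f d cin cout w x P.1 P.2.1 P.2.2| ^ pr
            ≤ (∑ Q : Fin cin × Fin d × Fin d,
                |T2 f d (w P.1 Q.1) (P.2.1, P.2.2) Q.2| * |x Q.1 Q.2.1 Q.2.2|) ^ pr :=
              Real.rpow_le_rpow (abs_nonneg _) (habs P.1 P.2.1 P.2.2) hpr0.le
          _ ≤ (∑ Q : Fin cin × Fin d × Fin d, |T2 f d (w P.1 Q.1) (P.2.1, P.2.2) Q.2|) ^ (pr - 1)
                * ∑ Q : Fin cin × Fin d × Fin d,
                    |T2 f d (w P.1 Q.1) (P.2.1, P.2.2) Q.2| * |x Q.1 Q.2.1 Q.2.2| ^ pr :=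
              aux_weighted_jensen _ _ (fun Q => abs_nonneg _) (fun Q => abs_nonneg _) hpr1
          _ ≤ RS ^ (pr - 1) * ∑ Q : Fin cin × Fin d × Fin d,
                |T2 f d (w P.1 Q.1) (P.2.1, P.2.2) Q.2| * |x Q.1 Q.2.1 Q.2.2| ^ pr := by
              refine mul_le_mul_of_nonneg_right ?_ (Finset.sum_nonneg fun Q _ =>
                mul_nonneg (abs_nonneg _) (Real.rpow_nonneg (abs_nonneg _) _))
              exact Real.rpow_le_rpow (Finset.sum_nonneg fun Q _ => abs_nonneg _)
                (hrow P.1 P.2.1 P.2.2) (by linarith)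
      calc ∑ P : Fin cout × Fin d × Fin d, |convLayer f d cin cout w x P.1 P.2.1 P.2.2| ^ pr
          ≤ ∑ P : Fin cout × Fin d × Fin d, RS ^ (pr - 1)
              * ∑ Q : Fin cin × Fin d × Fin d,
                  |T2 f d (w P.1 Q.1) (P.2.1, P.2.2) Q.2| * |x Q.1 Q.2.1 Q.2.2| ^ pr :=
            Finset.sum_le_sum fun P _ => step P
        _ = RS ^ (pr - 1) * ∑ P : Fin cout × Fin d × Fin d,
              ∑ Q : Fin cin × Fin d × Fin d,
                |T2 f d (w P.1 Q.1) (P.2.1, P.2.2) Q.2| * |x Q.1 Q.2.1 Q.2.2| ^ pr :=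
            (Finset.mul_sum _ _ _).symm
        _ = RS ^ (pr - 1) * ∑ Q : Fin cin × Fin d × Fin d,
              (∑ P : Fin cout × Fin d × Fin d, |T2 f d (w P.1 Q.1) (P.2.1, P.2.2) Q.2|)
                * |x Q.1 Q.2.1 Q.2.2| ^ pr := by
            rw [Finset.sum_comm]
            congr 1
            refine Finset.sum_congr rfl fun Q _ => ?_
            rw [Finset.sum_mul]
        _ ≤ RS ^ (pr - 1) * ∑ Q : Fin cin × Fin d × Fin d, CS * |x Q.1 Q.2.1 Q.2.2| ^ pr := by
            refine mul_le_mul_of_nonneg_left (Finset.sum_le_sum fun Q _ => ?_)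
              (Real.rpow_nonneg hRS0 _)
            have h2 : ∑ P : Fin cout × Fin d × Fin d, |T2 f d (w P.1 Q.1) (P.2.1, P.2.2) Q.2|
                = ∑ P : Fin cout × Fin d × Fin d, |T2 f d (w P.1 Q.1) P.2 Q.2| := by
              refine Finset.sum_congr rfl fun P _ => rfl
            refine mul_le_mul_of_nonneg_right ?_ (Real.rpow_nonneg (abs_nonneg _) _)
            rw [h2]
            exact hcol Q.1 Q.2
        _ = RS ^ (pr - 1) * (CS * T) := by rw [← Finset.mul_sum]
    have hNf : Nfactor p w = CS ^ (1/pr) * RS ^ (1 - 1/pr) := by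
      unfold Nfactor
      rw [aux_inv_toReal hpe]
    unfold tnorm lpNorm
    rw [if_neg hpe, if_neg hpe, hNf]
    have hTx : (∑ Q : Fin cin × Fin d × Fin d, |x Q.1 Q.2.1 Q.2.2| ^ pr) ^ (1/pr) = T ^ (1/pr) :=
      rfl
    calc (∑ P : Fin cout × Fin d × Fin d, |convLayer f d cin cout w x P.1 P.2.1 P.2.2| ^ pr)
          ^ (1/pr)
        ≤ (RS ^ (pr - 1) * (CS * T)) ^ (1/pr) :=
          Real.rpow_le_rpow (Finset.sum_nonneg fun P _ => Real.rpow_nonneg (abs_nonneg _) _)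
            main (by positivity)
      _ = RS ^ (1 - 1/pr) * (CS ^ (1/pr) * T ^ (1/pr)) := by
          rw [Real.mul_rpow (Real.rpow_nonneg hRS0 _) (mul_nonneg hCS0 hT0),
            Real.mul_rpow hCS0 hT0, ← Real.rpow_mul hRS0,
            show (pr - 1) * (1/pr) = 1 - 1/pr by field_simp]
      _ = CS ^ (1/pr) * RS ^ (1 - 1/pr) * T ^ (1/pr) := by ring


end ConvBound

section BlockBound

open Finset

variable {p : ℝ≥0∞} {d : ℕ}

lemma aux_hidden_le (hp : 1 ≤ p) (hd : 0 < d) (cc ff : ℕ → ℕ)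
    (ww : ∀ m, Fin (cc (m+1)) → Fin (cc m) → Fin (2 * ff m + 1) → Fin (2 * ff m + 1) → ℝ)
    (ββ : ∀ m, Fin (cc (m+1)) → ℝ) (x : Fin (cc 0) → Fin d → Fin d → ℝ)
    (m : ℕ) (hcp : ∀ m' ≤ m, 0 < cc m') :
    tnorm p (convHidden d cc ff ww ββ m x)
      ≤ (∏ m' ∈ Finset.range m, Nfactor p (ww m')) * tnorm p x
        + ∑ m' ∈ Finset.range m,
            (∏ m'' ∈ Finset.Ico (m'+1) m, Nfactor p (ww m''))
              * (((d:ℝ)^2) ^ ((1/p).toReal) * lpNorm p (ββ m')) := by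
  induction m with
  | zero => simp [convHidden]
  | succ m ih =>
    have hcp' : ∀ m' ≤ m, 0 < cc m' := fun m' h => hcp m' (h.trans (Nat.le_succ m))
    have hcm : 0 < cc m := hcp m (Nat.le_succ m)
    have hcm1 : 0 < cc (m+1) := hcp (m+1) le_rfl
    have h1 : tnorm p (convHidden d cc ff ww ββ (m+1) x)
        ≤ tnorm p (fun i a b => convLayer (ff m) d (cc m) (cc (m+1)) (ww m)
            (convHidden d cc ff ww ββ m x) i a b + ββ m i) := by
      refine aux_tnorm_mono hp hcm1 hd fun i a b => ?_
      show |max (convLayer (ff m) d (cc m) (cc (m+1)) (ww m)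
            (convHidden d cc ff ww ββ m x) i a b + ββ m i) 0| ≤ _
      rw [abs_of_nonneg (le_max_right _ _)]
      exact max_le (le_abs_self _) (abs_nonneg _)
    have h2 : tnorm p (fun i a b => convLayer (ff m) d (cc m) (cc (m+1)) (ww m)
            (convHidden d cc ff ww ββ m x) i a b + ββ m i)
        ≤ tnorm p (convLayer (ff m) d (cc m) (cc (m+1)) (ww m)
            (convHidden d cc ff ww ββ m x))
          + tnorm (d := d) p (fun i _ _ => ββ m i) :=
      aux_tnorm_add_le hp hcm1 hd _ _
    have h3 := aux_conv_tnorm_le hp hd hcm hcm1 (ww m) (convHidden d cc ff ww ββ m x)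
    have h4 := aux_tnorm_const_bias hp hcm1 hd (ββ m)
    have ih' := ih hcp'
    have hN0 : 0 ≤ Nfactor p (ww m) := aux_Nfactor_nonneg p (ww m)
    have hE : ∑ m' ∈ Finset.range (m+1),
          (∏ m'' ∈ Finset.Ico (m'+1) (m+1), Nfactor p (ww m''))
            * (((d:ℝ)^2) ^ ((1/p).toReal) * lpNorm p (ββ m'))
        = Nfactor p (ww m) * (∑ m' ∈ Finset.range m,
            (∏ m'' ∈ Finset.Ico (m'+1) m, Nfactor p (ww m''))
              * (((d:ℝ)^2) ^ ((1/p).toReal) * lpNorm p (ββ m')))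
          + ((d:ℝ)^2) ^ ((1/p).toReal) * lpNorm p (ββ m) := by
      rw [Finset.sum_range_succ, Finset.Ico_self, Finset.prod_empty, one_mul, Finset.mul_sum]
      congr 1
      refine Finset.sum_congr rfl fun m' hm' => ?_
      rw [Finset.prod_Ico_succ_top (Nat.succ_le_of_lt (Finset.mem_range.mp hm'))]
      ring
    calc tnorm p (convHidden d cc ff ww ββ (m+1) x)
        ≤ tnorm p (convLayer (ff m) d (cc m) (cc (m+1)) (ww m)
            (convHidden d cc ff ww ββ m x)) + tnorm (d := d) p (fun i _ _ => ββ m i) :=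
          h1.trans h2
      _ ≤ Nfactor p (ww m) * tnorm p (convHidden d cc ff ww ββ m x)
            + ((d:ℝ)^2) ^ ((1/p).toReal) * lpNorm p (ββ m) := add_le_add h3 h4
      _ ≤ Nfactor p (ww m) * ((∏ m' ∈ Finset.range m, Nfactor p (ww m')) * tnorm p x
            + ∑ m' ∈ Finset.range m, (∏ m'' ∈ Finset.Ico (m'+1) m, Nfactor p (ww m''))
              * (((d:ℝ)^2) ^ ((1/p).toReal) * lpNorm p (ββ m')))
            + ((d:ℝ)^2) ^ ((1/p).toReal) * lpNorm p (ββ m) := by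
          exact add_le_add_left (mul_le_mul_of_nonneg_left ih' hN0) _
      _ = (∏ m' ∈ Finset.range (m+1), Nfactor p (ww m')) * tnorm p x
            + ∑ m' ∈ Finset.range (m+1),
                (∏ m'' ∈ Finset.Ico (m'+1) (m+1), Nfactor p (ww m''))
                  * (((d:ℝ)^2) ^ ((1/p).toReal) * lpNorm p (ββ m')) := by
          rw [Finset.prod_range_succ, hE]
          ring

set_option maxHeartbeats 3000000 in
lemma aux_block_diff_le (hp : 1 ≤ p) (hd : 0 < d) {cres : ℕ} (hcres : 0 < cres)
    (Q : ℕ) (hQ : 0 < Q) (cc : ℕ → ℕ) (hc0 : cc 0 = cres) (hcq : cc Q = cres)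
    (ff : ℕ → ℕ)
    (ww : ∀ m, Fin (cc (m+1)) → Fin (cc m) → Fin (2 * ff m + 1) → Fin (2 * ff m + 1) → ℝ)
    (ββ : ∀ m, Fin (cc (m+1)) → ℝ)
    (hcp : ∀ m ≤ Q, 0 < cc m)
    (z : Fin cres → Fin d → Fin d → ℝ) (hz : ∀ i a b, 0 ≤ z i a b) :
    tnorm p (fun i a b => convBlock d Q hQ cres cc hc0 hcq ff ww ββ z i a b - z i a b)
      ≤ (∏ m ∈ Finset.range Q, Nfactor p (ww m)) * tnorm p z
        + ((d:ℝ)^2) ^ ((1/p).toReal)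
            * ∑ m ∈ Finset.range Q, (∏ m' ∈ Finset.Ico (m+1) Q, Nfactor p (ww m'))
                * lpNorm p (ββ m) := by
  have h1 : cc (Q-1+1) = cres := (congrArg cc (Nat.succ_pred_eq_of_pos hQ)).trans hcq
  have hcQ1 : 0 < cc (Q-1+1) := h1 ▸ hcres
  have hcQ0 : 0 < cc (Q-1) := hcp (Q-1) (Nat.le_of_succ_le ((Nat.succ_pred_eq_of_pos hQ).le.trans le_rfl))
  set g : Fin (cc (Q-1+1)) → Fin d → Fin d → ℝ := fun i a b =>
    convLayer (ff (Q-1)) d (cc (Q-1)) (cc (Q-1+1)) (ww (Q-1))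
      (convHidden d cc ff ww ββ (Q-1) (castChan hc0.symm z)) i a b + ββ (Q-1) i with hg
  have step1 : tnorm p (fun i a b =>
      convBlock d Q hQ cres cc hc0 hcq ff ww ββ z i a b - z i a b)
      ≤ tnorm p (castChan h1 g) := by
    refine aux_tnorm_mono hp hcres hd fun i a b => ?_
    show |max (convLayer (ff (Q-1)) d (cc (Q-1)) (cc (Q-1+1)) (ww (Q-1))
          (convHidden d cc ff ww ββ (Q-1) (castChan hc0.symm z)) (Fin.cast h1.symm i) a b
        + z (Fin.cast h1 (Fin.cast h1.symm i)) a b + ββ (Q-1) (Fin.cast h1.symm i)) 0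
        - z i a b| ≤ |castChan h1 g i a b|
    have hcast : Fin.cast h1 (Fin.cast h1.symm i) = i := rfl
    rw [hcast]
    have hzz : z i a b = max (z i a b) 0 := (max_eq_left (hz i a b)).symm
    calc |max (convLayer (ff (Q-1)) d (cc (Q-1)) (cc (Q-1+1)) (ww (Q-1))
            (convHidden d cc ff ww ββ (Q-1) (castChan hc0.symm z)) (Fin.cast h1.symm i) a b
          + z i a b + ββ (Q-1) (Fin.cast h1.symm i)) 0 - z i a b|
        = |max (convLayer (ff (Q-1)) d (cc (Q-1)) (cc (Q-1+1)) (ww (Q-1))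
            (convHidden d cc ff ww ββ (Q-1) (castChan hc0.symm z)) (Fin.cast h1.symm i) a b
          + z i a b + ββ (Q-1) (Fin.cast h1.symm i)) 0 - max (z i a b) 0| := by rw [← hzz]
      _ ≤ |convLayer (ff (Q-1)) d (cc (Q-1)) (cc (Q-1+1)) (ww (Q-1))
            (convHidden d cc ff ww ββ (Q-1) (castChan hc0.symm z)) (Fin.cast h1.symm i) a b
          + z i a b + ββ (Q-1) (Fin.cast h1.symm i) - z i a b| := abs_max_sub_max_le_abs _ _ _
      _ = |castChan h1 g i a b| := by
          rw [show convLayer (ff (Q-1)) d (cc (Q-1)) (cc (Q-1+1)) (ww (Q-1))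
            (convHidden d cc ff ww ββ (Q-1) (castChan hc0.symm z)) (Fin.cast h1.symm i) a b
          + z i a b + ββ (Q-1) (Fin.cast h1.symm i) - z i a b
            = castChan h1 g i a b from by show _ = g (Fin.cast h1.symm i) a b; rw [hg]; ring]
  have step2 : tnorm p (castChan h1 g) = tnorm p g := aux_tnorm_castChan h1 g
  have step3 : tnorm p g
      ≤ Nfactor p (ww (Q-1)) * tnorm p (convHidden d cc ff ww ββ (Q-1) (castChan hc0.symm z))
        + ((d:ℝ)^2) ^ ((1/p).toReal) * lpNorm p (ββ (Q-1)) := by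
    refine le_trans (aux_tnorm_add_le hp hcQ1 hd _ _) (add_le_add ?_ ?_)
    · exact aux_conv_tnorm_le hp hd hcQ0 hcQ1 (ww (Q-1)) _
    · exact aux_tnorm_const_bias hp hcQ1 hd (ββ (Q-1))
  have step4 := aux_hidden_le hp hd cc ff ww ββ (castChan hc0.symm z) (Q-1)
    (fun m' hm' => hcp m' (hm'.trans (Nat.pred_le Q)))
  rw [aux_tnorm_castChan hc0.symm z] at step4
  have hN0 : 0 ≤ Nfactor p (ww (Q-1)) := aux_Nfactor_nonneg p (ww (Q-1))
  obtain ⟨Q', hQ'⟩ := Nat.exists_eq_succ_of_ne_zero hQ.ne'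
  subst hQ'
  have hE : ∑ m ∈ Finset.range (Q'+1),
        (∏ m' ∈ Finset.Ico (m+1) (Q'+1), Nfactor p (ww m')) * lpNorm p (ββ m)
      = Nfactor p (ww Q') * (∑ m ∈ Finset.range Q',
          (∏ m' ∈ Finset.Ico (m+1) Q', Nfactor p (ww m')) * lpNorm p (ββ m))
        + lpNorm p (ββ Q') := by
    rw [Finset.sum_range_succ, Finset.Ico_self, Finset.prod_empty, one_mul, Finset.mul_sum]
    congr 1
    refine Finset.sum_congr rfl fun m' hm' => ?_
    rw [Finset.prod_Ico_succ_top (Nat.succ_le_of_lt (Finset.mem_range.mp hm'))]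
    ring
  calc tnorm p (fun i a b =>
        convBlock d (Q'+1) hQ cres cc hc0 hcq ff ww ββ z i a b - z i a b)
      ≤ tnorm p g := step1.trans step2.le
    _ ≤ Nfactor p (ww Q') * tnorm p (convHidden d cc ff ww ββ Q' (castChan hc0.symm z))
        + ((d:ℝ)^2) ^ ((1/p).toReal) * lpNorm p (ββ Q') := step3
    _ ≤ Nfactor p (ww Q') * ((∏ m' ∈ Finset.range Q', Nfactor p (ww m')) * tnorm p z
          + ∑ m' ∈ Finset.range Q', (∏ m'' ∈ Finset.Ico (m'+1) Q', Nfactor p (ww m''))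
            * (((d:ℝ)^2) ^ ((1/p).toReal) * lpNorm p (ββ m')))
        + ((d:ℝ)^2) ^ ((1/p).toReal) * lpNorm p (ββ Q') :=
        add_le_add_left (mul_le_mul_of_nonneg_left step4 hN0) _
    _ = (∏ m ∈ Finset.range (Q'+1), Nfactor p (ww m)) * tnorm p z
        + ((d:ℝ)^2) ^ ((1/p).toReal)
            * ∑ m ∈ Finset.range (Q'+1), (∏ m' ∈ Finset.Ico (m+1) (Q'+1), Nfactor p (ww m'))
                * lpNorm p (ββ m) := by
        rw [Finset.prod_range_succ, hE]
        have hswap : Nfactor p (ww Q') * ∑ m' ∈ Finset.range Q',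
            (∏ m'' ∈ Finset.Ico (m'+1) Q', Nfactor p (ww m''))
              * (((d:ℝ)^2) ^ ((1/p).toReal) * lpNorm p (ββ m'))
          = ((d:ℝ)^2) ^ ((1/p).toReal) * ∑ m ∈ Finset.range Q',
              Nfactor p (ww Q') * ((∏ m' ∈ Finset.Ico (m+1) Q', Nfactor p (ww m')) * lpNorm p (ββ m)) := by
          rw [Finset.mul_sum, Finset.mul_sum]
          exact Finset.sum_congr rfl fun m _ => by ring
        rw [mul_add, hswap, ← Finset.mul_sum]
        ring

end BlockBound


end Stmt7Aux


theorem stmt7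
    (d cin cres : ℕ) (hd : 0 < d) (hcin : 0 < cin) (hcres : 0 < cres)
    (p : ℝ≥0∞) (hp : 1 ≤ p)
    (q : ℕ → ℕ) (hq : ∀ n, 0 < q n) (hq0 : q 0 = 1) (hqb : ∃ Q, ∀ n, q n ≤ Q)
    (c : ℕ → ℕ → ℕ) (hc00 : c 0 0 = cin) (h01 : c 0 1 = cres)
    (hc0 : ∀ n, 0 < n → c n 0 = cres) (hcq : ∀ n, 0 < n → c n (q n) = cres)
    (hcpos : ∀ n m, m ≤ q n → 0 < c n m) (hcb : ∃ C, ∀ n m, m ≤ q n → c n m ≤ C)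
    (hcinle : ∀ n m, m ≤ q n → cin ≤ c n m)
    (f : ℕ → ℕ → ℕ) (hf : ∀ n m, m < q n → 0 < f n m)
    (hfb : ∃ Fb, ∀ n m, m < q n → f n m ≤ Fb)
    (hfd : ∀ n m, m < q n → f n m + 1 ≤ d)
    (w : ∀ n m, Fin (c n (m+1)) → Fin (c n m) → Fin (2 * f n m + 1) → Fin (2 * f n m + 1) → ℝ)
    (β : ∀ n m, Fin (c n (m+1)) → ℝ)
    (hw : Summable fun n => ∏ m ∈ Finset.range (q n), Nfactor p (w n m))
    (hb : Summable fun n => ∑ m ∈ Finset.range (q n),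
      (∏ m' ∈ Finset.Ico (m+1) (q n), Nfactor p (w n m')) * lpNorm p (β n m)) :
    ∀ x : Fin cin → Fin d → Fin d → ℝ, (∀ i a b, x i a b ∈ Set.Icc (0:ℝ) 1) →
      ∃ y, Tendsto (fun n => convNet d cin cres q hq c hc00 h01 hc0 hcq f w β n x)
        atTop (nhds y) := by
  intro x hx
  classical
  set y : ℕ → Fin cres → Fin d → Fin d → ℝ :=
    fun n => convNet d cin cres q hq c hc00 h01 hc0 hcq f w β n x with hy
  have hrec : ∀ n, y (n+1) = convBlock d (q (n+1)) (hq (n+1)) cres (c (n+1))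
      (hc0 (n+1) (Nat.succ_pos n)) (hcq (n+1) (Nat.succ_pos n)) (f (n+1)) (w (n+1)) (β (n+1))
      (y n) := fun n => rfl
  have hpos : ∀ n i a b', 0 ≤ y n i a b' := by
    intro n i a b'
    cases n with
    | zero => exact le_max_right _ _
    | succ n => exact le_max_right _ _
  set A : ℕ → ℝ := fun n => ∏ m ∈ Finset.range (q n), Nfactor p (w n m) with hA
  set B : ℕ → ℝ := fun n => ∑ m ∈ Finset.range (q n),
      (∏ m' ∈ Finset.Ico (m+1) (q n), Nfactor p (w n m')) * lpNorm p (β n m) with hB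
  have hA0 : ∀ n, 0 ≤ A n := fun n => Finset.prod_nonneg fun m _ => aux_Nfactor_nonneg p (w n m)
  have hB0 : ∀ n, 0 ≤ B n := fun n => Finset.sum_nonneg fun m _ =>
    mul_nonneg (Finset.prod_nonneg fun m' _ => aux_Nfactor_nonneg p (w n m'))
      (aux_lpNorm_nonneg _)
  have hAsum : Summable A := hw
  have hBsum : Summable B := hb
  set Kd : ℝ := ((d:ℝ)^2) ^ ((1/p).toReal) with hKddef
  have hKd0 : 0 ≤ Kd := Real.rpow_nonneg (by positivity) _
  have hdiff : ∀ n, tnorm p (fun i a b' => y (n+1) i a b' - y n i a b')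
      ≤ A (n+1) * tnorm p (y n) + Kd * B (n+1) := by
    intro n
    have h := aux_block_diff_le (p := p) hp hd hcres (q (n+1)) (hq (n+1)) (c (n+1))
      (hc0 (n+1) (Nat.succ_pos n)) (hcq (n+1) (Nat.succ_pos n)) (f (n+1)) (w (n+1)) (β (n+1))
      (fun m hm => hcpos (n+1) m hm) (y n) (hpos n)
    rw [hrec n]
    exact h
  have hstep : ∀ n, tnorm p (y (n+1)) ≤ tnorm p (y n) * (1 + A (n+1)) + Kd * B (n+1) := by
    intro n
    have he : tnorm p (y (n+1))
        = tnorm p (fun i a b' => y n i a b' + (y (n+1) i a b' - y n i a b')) := by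
      congr 1
      funext i a b'
      ring
    have h2 : tnorm p (fun i a b' => y n i a b' + (y (n+1) i a b' - y n i a b'))
        ≤ tnorm p (y n) + tnorm p (fun i a b' => y (n+1) i a b' - y n i a b') :=
      aux_tnorm_add_le hp hcres hd (y n) (fun i a b' => y (n+1) i a b' - y n i a b')
    have h3 := hdiff n
    calc tnorm p (y (n+1))
        = tnorm p (fun i a b' => y n i a b' + (y (n+1) i a b' - y n i a b')) := he
      _ ≤ tnorm p (y n) + tnorm p (fun i a b' => y (n+1) i a b' - y n i a b') := h2
      _ ≤ tnorm p (y n) + (A (n+1) * tnorm p (y n) + Kd * B (n+1)) := by linarith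
      _ = tnorm p (y n) * (1 + A (n+1)) + Kd * B (n+1) := by ring
  have hgron : ∀ n, tnorm p (y n)
      ≤ (tnorm p (y 0) + Kd * ∑ k ∈ Finset.range n, B (k+1))
          * ∏ k ∈ Finset.range n, (1 + A (k+1)) := by
    intro n
    induction n with
    | zero => simp
    | succ n ih =>
      have hP1' : (1:ℝ) ≤ ∏ k ∈ Finset.range (n+1), (1 + A (k+1)) := by
        calc (1:ℝ) = ∏ k ∈ Finset.range (n+1), 1 := by simp
          _ ≤ ∏ k ∈ Finset.range (n+1), (1 + A (k+1)) :=
            Finset.prod_le_prod (fun k _ => zero_le_one) (fun k _ => by linarith [hA0 (k+1)])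
      have hy0 : 0 ≤ tnorm p (y 0) := aux_tnorm_nonneg _
      have hSB : 0 ≤ ∑ k ∈ Finset.range n, B (k+1) :=
        Finset.sum_nonneg fun k _ => hB0 (k+1)
      have hKB : 0 ≤ Kd * B (n+1) := mul_nonneg hKd0 (hB0 (n+1))
      calc tnorm p (y (n+1)) ≤ tnorm p (y n) * (1 + A (n+1)) + Kd * B (n+1) := hstep n
        _ ≤ ((tnorm p (y 0) + Kd * ∑ k ∈ Finset.range n, B (k+1))
              * ∏ k ∈ Finset.range n, (1 + A (k+1))) * (1 + A (n+1)) + Kd * B (n+1) := by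
            have h1p : (0:ℝ) ≤ 1 + A (n+1) := by linarith [hA0 (n+1)]
            have := mul_le_mul_of_nonneg_right ih h1p
            linarith
        _ = (tnorm p (y 0) + Kd * ∑ k ∈ Finset.range n, B (k+1))
              * ∏ k ∈ Finset.range (n+1), (1 + A (k+1)) + Kd * B (n+1) := by
            rw [Finset.prod_range_succ]; ring
        _ ≤ (tnorm p (y 0) + Kd * ∑ k ∈ Finset.range (n+1), B (k+1))
              * ∏ k ∈ Finset.range (n+1), (1 + A (k+1)) := by
            rw [Finset.sum_range_succ]
            nlinarith [mul_nonneg hKB (sub_nonneg.mpr hP1'), hy0,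
              mul_nonneg hKd0 hSB]
  have hBpart : ∀ n, ∑ k ∈ Finset.range n, B (k+1) ≤ ∑' k, B k := by
    intro n
    have h1 : ∑ k ∈ Finset.range n, B (k+1) = ∑ k ∈ Finset.Ico 1 (n+1), B k := by
      rw [Finset.sum_Ico_eq_sum_range]
      simp [add_comm]
    rw [h1]
    exact Summable.sum_le_tsum _ (fun i _ => hB0 i) hBsum
  have hApart : ∀ n, ∑ k ∈ Finset.range n, A (k+1) ≤ ∑' k, A k := by
    intro n
    have h1 : ∑ k ∈ Finset.range n, A (k+1) = ∑ k ∈ Finset.Ico 1 (n+1), A k := by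
      rw [Finset.sum_Ico_eq_sum_range]
      simp [add_comm]
    rw [h1]
    exact Summable.sum_le_tsum _ (fun i _ => hA0 i) hAsum
  have hprodbound : ∀ n, ∏ k ∈ Finset.range n, (1 + A (k+1)) ≤ Real.exp (∑' k, A k) := by
    intro n
    calc ∏ k ∈ Finset.range n, (1 + A (k+1)) ≤ ∏ k ∈ Finset.range n, Real.exp (A (k+1)) :=
        Finset.prod_le_prod (fun k _ => by linarith [hA0 (k+1)])
          (fun k _ => by linarith [Real.add_one_le_exp (A (k+1))])
      _ = Real.exp (∑ k ∈ Finset.range n, A (k+1)) := (Real.exp_sum _ _).symm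
      _ ≤ Real.exp (∑' k, A k) := Real.exp_le_exp.mpr (hApart n)
  set M0 : ℝ := (tnorm p (y 0) + Kd * ∑' k, B k) * Real.exp (∑' k, A k) with hM0
  have hM : ∀ n, tnorm p (y n) ≤ M0 := by
    intro n
    have hy0 : 0 ≤ tnorm p (y 0) := aux_tnorm_nonneg _
    have htB : 0 ≤ ∑' k, B k := tsum_nonneg hB0
    have hPn0 : 0 ≤ ∏ k ∈ Finset.range n, (1 + A (k+1)) :=
      Finset.prod_nonneg fun k _ => by linarith [hA0 (k+1)]
    refine (hgron n).trans ?_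
    refine mul_le_mul ?_ (hprodbound n) hPn0 ?_
    · have h1 := hBpart n
      have := mul_le_mul_of_nonneg_left h1 hKd0
      linarith
    · have := mul_nonneg hKd0 htB
      linarith
  set G : ℕ → ℝ := fun n => A (n+1) * M0 + Kd * B (n+1) with hG
  have hdiffG : ∀ n, tnorm p (fun i a b' => y (n+1) i a b' - y n i a b') ≤ G n := by
    intro n
    have h2 : A (n+1) * tnorm p (y n) ≤ A (n+1) * M0 :=
      mul_le_mul_of_nonneg_left (hM n) (hA0 (n+1))
    have h1 := hdiff n
    have : G n = A (n+1) * M0 + Kd * B (n+1) := rfl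
    linarith
  have hGsum : Summable G := by
    have h1 : Summable (fun n => A (n+1)) := (summable_nat_add_iff 1).mpr hAsum
    have h2 : Summable (fun n => B (n+1)) := (summable_nat_add_iff 1).mpr hBsum
    exact (h1.mul_right M0).add (h2.mul_left Kd)
  have hlim : ∀ i a b', ∃ L, Tendsto (fun n => y n i a b') atTop (nhds L) := by
    intro i a b'
    have hd1 : ∀ n, dist (y n i a b') (y (n+1) i a b') ≤ G n := by
      intro n
      rw [Real.dist_eq, abs_sub_comm]
      exact (aux_tnorm_coord hp (fun i a b' => y (n+1) i a b' - y n i a b') i a b').trans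
        (hdiffG n)
    have hsum : Summable fun n => dist (y n i a b') (y (n+1) i a b') :=
      Summable.of_nonneg_of_le (fun n => dist_nonneg) hd1 hGsum
    exact cauchySeq_tendsto_of_complete (cauchySeq_of_summable_dist hsum)
  refine ⟨fun i a b' => (hlim i a b').choose, ?_⟩
  rw [tendsto_pi_nhds]
  intro i
  rw [tendsto_pi_nhds]
  intro a
  rw [tendsto_pi_nhds]
  intro b'
  exact (hlim i a b').choose_spec


end
end
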